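/- arXiv:2211.02841 — 3 statements merged into one kernel-verified Lean document; each statement's English description precedes it below -/
import Mathlib

section
/- Let A ∈ ℂ^{n×n×n3} with ind(A) = k, and let Y ∈ ℂ^{n×n×n3} be any tensor satisfying A^{2k+1} *_c Y *_c A^{2k+1} = A^{2k+1} (a {1}-inverse of A^{2k+1}). Then the Drazin inverse of A is A^D = A^k *_c Y *_c A^k. In particular, A^D = A^k *_c (A^{2k+1})^† *_c A^k, where (A^{2k+1})^† is the Moore-Penrose inverse of A^{2k+1}. -/
noncomputable section

/-- A third-order tensor: a family of frontal slices. -/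
abbrev Tensor (n1 n2 n3 : ℕ) : Type := Fin n3 → Matrix (Fin n1) (Fin n2) ℂ

namespace Tensor

/-- The block Toeplitz-plus-Hankel matrix `mat(A)` associated to a tensor. -/
def matT {n1 n2 n3 : ℕ} (A : Tensor n1 n2 n3) :
    Matrix (Fin n3 × Fin n1) (Fin n3 × Fin n2) ℂ := fun p q =>
  A ⟨p.1.1 - q.1.1 + (q.1.1 - p.1.1), by
        have h1 := p.1.isLt; have h2 := q.1.isLt; omega⟩ p.2 q.2 +
    (if h : p.1.1 + q.1.1 + 2 ≤ n3 then A ⟨p.1.1 + q.1.1 + 1, by omega⟩ p.2 q.2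
     else if h2 : n3 ≤ p.1.1 + q.1.1 then
       A ⟨2 * n3 - (p.1.1 + q.1.1) - 1, by have h1 := p.1.isLt; omega⟩ p.2 q.2
     else 0)

/-- `ten`, the inverse of `mat` on its range: the slices of a tensor are recovered
from the first block-column of its `mat` by an alternating sum. -/
def tenT {n1 n2 n3 : ℕ} (M : Matrix (Fin n3 × Fin n1) (Fin n3 × Fin n2) ℂ) :
    Tensor n1 n2 n3 := fun i => Matrix.of fun a b =>
  ∑ t : Fin n3, if i.1 ≤ t.1 then (-1 : ℂ) ^ (t.1 - i.1) * M (t, a) (⟨0, i.pos⟩, b) else 0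

/-- The C-product of two tensors: the unique tensor whose `mat` is `mat(A) * mat(B)`. -/
def cmul {n1 n2 l n3 : ℕ} (A : Tensor n1 n2 n3) (B : Tensor n2 l n3) : Tensor n1 l n3 :=
  tenT (matT A * matT B)

/-- The conjugate transpose of a tensor, taken slice-wise. -/
def conjT {n1 n2 n3 : ℕ} (A : Tensor n1 n2 n3) : Tensor n2 n1 n3 := fun i => (A i).conjTranspose

/-- The identity tensor: the tensor whose `mat` is the identity matrix. -/
def idT {n n3 : ℕ} : Tensor n n n3 := fun i => if i.1 = 0 then 1 else 0

/-- A tensor is unitary if `Qᴴ *c Q = Q *c Qᴴ = I`. -/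
def Unitary {n n3 : ℕ} (Q : Tensor n n n3) : Prop :=
  cmul (conjT Q) Q = idT ∧ cmul Q (conjT Q) = idT

/-- `X` is the inverse of the square tensor `B` under the C-product. -/
def IsInverse {n n3 : ℕ} (B X : Tensor n n n3) : Prop :=
  cmul B X = idT ∧ cmul X B = idT

/-- `X` is the Moore-Penrose inverse of `A` under the C-product. -/
def IsMP {n1 n2 n3 : ℕ} (A : Tensor n1 n2 n3) (X : Tensor n2 n1 n3) : Prop :=
  cmul (cmul A X) A = A ∧ cmul (cmul X A) X = X ∧
    conjT (cmul A X) = cmul A X ∧ conjT (cmul X A) = cmul X A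

/-- Powers of a square tensor with respect to the C-product. -/
def cpow {n n3 : ℕ} (A : Tensor n n n3) : ℕ → Tensor n n n3
  | 0 => idT
  | m + 1 => cmul (cpow A m) A

/-- `ind(A) = k`: `k` is the smallest nonnegative integer with
`rank(mat(A)^k) = rank(mat(A)^(k+1))`. -/
def IsIndex {n n3 : ℕ} (A : Tensor n n n3) (k : ℕ) : Prop :=
  (matT A ^ k).rank = (matT A ^ (k + 1)).rank ∧
    ∀ j < k, (matT A ^ j).rank ≠ (matT A ^ (j + 1)).rank

/-- `X` is the Drazin inverse of `A` (of index `k`) under the C-product. -/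
def IsDrazin {n n3 : ℕ} (A : Tensor n n n3) (k : ℕ) (X : Tensor n n n3) : Prop :=
  cmul (cpow A (k + 1)) X = cpow A k ∧ cmul (cmul X A) X = X ∧ cmul A X = cmul X A

/-- `X` is an inverse of `A` along `G` under the C-product. -/
def IsInvAlong {n1 n2 n3 : ℕ} (A : Tensor n1 n2 n3) (G X : Tensor n2 n1 n3) : Prop :=
  cmul (cmul X A) G = G ∧ cmul (cmul G A) X = G ∧
    (∃ U : Tensor n1 n1 n3, X = cmul G U) ∧
    (∃ V : Tensor n2 n2 n3, conjT X = cmul (conjT G) V)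

/-- All frontal slices are diagonal. -/
def FDiag {n1 n2 n3 : ℕ} (A : Tensor n1 n2 n3) : Prop :=
  ∀ (i : Fin n3) (a : Fin n1) (b : Fin n2), (a : ℕ) ≠ (b : ℕ) → A i a b = 0

/-- All frontal slices are upper triangular. -/
def FUpper {n1 n2 n3 : ℕ} (A : Tensor n1 n2 n3) : Prop :=
  ∀ (i : Fin n3) (a : Fin n1) (b : Fin n2), (b : ℕ) < (a : ℕ) → A i a b = 0

/-- All frontal slices are lower triangular. -/
def FLower {n1 n2 n3 : ℕ} (A : Tensor n1 n2 n3) : Prop :=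
  ∀ (i : Fin n3) (a : Fin n1) (b : Fin n2), (a : ℕ) < (b : ℕ) → A i a b = 0

/-- Slice-wise 2×2 block tensor `[[A, B],[C, D]]`. -/
def blockT {r s t u n3 : ℕ} (A : Tensor r t n3) (B : Tensor r u n3)
    (C : Tensor s t n3) (D : Tensor s u n3) : Tensor (r + s) (t + u) n3 := fun i =>
  Matrix.reindex finSumFinEquiv finSumFinEquiv (Matrix.fromBlocks (A i) (B i) (C i) (D i))

/-- The mode-3 product of a tensor with an `n3 × n3` matrix. -/
def mode3 {n1 n2 n3 : ℕ} (A : Tensor n1 n2 n3) (M : Matrix (Fin n3) (Fin n3) ℂ) :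
    Tensor n1 n2 n3 := fun l => ∑ i, M l i • A i

end Tensor

namespace CProof
open Tensor

variable {n1 n2 l n3 : ℕ}

instance inst2n3 [NeZero n3] : NeZero (2 * n3) := ⟨fun h => (NeZero.ne n3) (by omega)⟩

/-- folded symmetric extension of the slices to `ZMod (2*n3)`. -/
def extT [NeZero n3] (A : Tensor n1 n2 n3) (m : ZMod (2 * n3)) :
    Matrix (Fin n1) (Fin n2) ℂ :=
  if h : m.val < n3 then A ⟨m.val, h⟩
  else if h2 : n3 < m.val then
    A ⟨2 * n3 - m.val, by have := m.val_lt; omega⟩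
  else 0

lemma tensor_congr (A : Tensor n1 n2 n3) {x y : Fin n3} (h : (x : ℕ) = (y : ℕ))
    (a : Fin n1) (b : Fin n2) : A x a b = A y a b := by
  congr 1; exact Fin.ext h

lemma cast_val [NeZero n3] (m : ZMod (2 * n3)) : ((m.val : ℕ) : ZMod (2 * n3)) = m :=
  ZMod.natCast_rightInverse m

lemma val_natCast_lt [NeZero n3] {x : ℕ} (h : x < 2 * n3) :
    ((x : ZMod (2 * n3))).val = x := ZMod.val_cast_of_lt h

lemma val_sub_le [NeZero n3] {i j : ℕ} (hi : i < n3) (hj : j < n3) (h : j ≤ i) :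
    ((i : ZMod (2 * n3)) - (j : ZMod (2 * n3))).val = i - j := by
  have key : (i : ZMod (2 * n3)) - (j : ZMod (2 * n3)) = ((i + (2 * n3 - j) : ℕ) : ZMod (2 * n3)) := by
    rw [Nat.cast_add, Nat.cast_sub (by omega : j ≤ 2 * n3), ZMod.natCast_self]; ring
  rw [key, ZMod.val_natCast]
  have h2 : i + (2 * n3 - j) = 2 * n3 + (i - j) := by omega
  rw [h2, Nat.add_mod_left, Nat.mod_eq_of_lt (by omega)]

lemma val_sub_lt [NeZero n3] {i j : ℕ} (hi : i < n3) (hj : j < n3) (h : i < j) :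
    ((i : ZMod (2 * n3)) - (j : ZMod (2 * n3))).val = 2 * n3 - (j - i) := by
  have key : (i : ZMod (2 * n3)) - (j : ZMod (2 * n3)) = ((i + (2 * n3 - j) : ℕ) : ZMod (2 * n3)) := by
    rw [Nat.cast_add, Nat.cast_sub (by omega : j ≤ 2 * n3), ZMod.natCast_self]; ring
  rw [key, ZMod.val_natCast, Nat.mod_eq_of_lt (by omega)]
  omega

lemma val_addone [NeZero n3] {i j : ℕ} (hi : i < n3) (hj : j < n3) :
    ((i : ZMod (2 * n3)) + (j : ZMod (2 * n3)) + 1).val = i + j + 1 := by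
  have key : (i : ZMod (2 * n3)) + (j : ZMod (2 * n3)) + 1 = ((i + j + 1 : ℕ) : ZMod (2 * n3)) := by
    push_cast; ring
  rw [key, ZMod.val_natCast, Nat.mod_eq_of_lt (by omega)]

/-- generalized circulant-type block matrix built from a symbol `c`. -/
def circM (c : ZMod (2 * n3) → Matrix (Fin n1) (Fin n2) ℂ) :
    Matrix (Fin n3 × Fin n1) (Fin n3 × Fin n2) ℂ := fun p q =>
  (c (((p.1 : ℕ) : ZMod (2 * n3)) - ((q.1 : ℕ) : ZMod (2 * n3))) +
    c (((p.1 : ℕ) : ZMod (2 * n3)) + ((q.1 : ℕ) : ZMod (2 * n3)) + 1)) p.2 q.2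

lemma matT_eq_circM [NeZero n3] (A : Tensor n1 n2 n3) : matT A = circM (extT A) := by
  funext p q
  obtain ⟨i, a⟩ := p; obtain ⟨j, b⟩ := q
  have hi := i.isLt; have hj := j.isLt
  simp only [matT, circM, Matrix.add_apply]
  have T1 : A ⟨(i : ℕ) - (j : ℕ) + ((j : ℕ) - (i : ℕ)), by omega⟩ a b
      = extT A (((i : ℕ) : ZMod (2 * n3)) - ((j : ℕ) : ZMod (2 * n3))) a b := by
    rcases le_or_gt (j : ℕ) (i : ℕ) with h | h
    · rw [extT, dif_pos (by rw [val_sub_le hi hj h]; omega)]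
      refine tensor_congr A ?_ a b
      show (i : ℕ) - (j : ℕ) + ((j : ℕ) - (i : ℕ))
          = (((i : ℕ) : ZMod (2 * n3)) - ((j : ℕ) : ZMod (2 * n3))).val
      rw [val_sub_le hi hj h]; omega
    · have hv := val_sub_lt hi hj h
      rw [extT, dif_neg (by omega), dif_pos (by omega)]
      refine tensor_congr A ?_ a b
      show (i : ℕ) - (j : ℕ) + ((j : ℕ) - (i : ℕ))
          = 2 * n3 - (((i : ℕ) : ZMod (2 * n3)) - ((j : ℕ) : ZMod (2 * n3))).val
      rw [hv]; omega
  have T2 : (if h : (i : ℕ) + (j : ℕ) + 2 ≤ n3 then A ⟨(i:ℕ) + (j:ℕ) + 1, by omega⟩ a b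
      else if h2 : n3 ≤ (i:ℕ) + (j:ℕ) then
        A ⟨2 * n3 - ((i:ℕ) + (j:ℕ)) - 1, by omega⟩ a b
      else 0)
      = extT A (((i : ℕ) : ZMod (2 * n3)) + ((j : ℕ) : ZMod (2 * n3)) + 1) a b := by
    have hv := val_addone hi hj
    rcases Nat.lt_trichotomy ((i:ℕ) + (j:ℕ) + 1) n3 with h | h | h
    · rw [dif_pos (by omega), extT, dif_pos (by omega)]
      refine tensor_congr A ?_ a b
      show (i : ℕ) + (j : ℕ) + 1
          = (((i : ℕ) : ZMod (2 * n3)) + ((j : ℕ) : ZMod (2 * n3)) + 1).val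
      rw [hv]
    · rw [dif_neg (by omega), dif_neg (by omega), extT, dif_neg (by omega), dif_neg (by omega)]
      simp
    · rw [dif_neg (by omega), dif_pos (by omega), extT, dif_neg (by omega), dif_pos (by omega)]
      refine tensor_congr A ?_ a b
      show 2 * n3 - ((i : ℕ) + (j : ℕ)) - 1
          = 2 * n3 - (((i : ℕ) : ZMod (2 * n3)) + ((j : ℕ) : ZMod (2 * n3)) + 1).val
      rw [hv]; omega
  rw [T1, T2]

lemma cast_reflect [NeZero n3] {s : ℕ} (hs : s < n3) :
    (-1 - ((s : ℕ) : ZMod (2 * n3))) = (((2 * n3 - 1 - s : ℕ)) : ZMod (2 * n3)) := by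
  have : (((2 * n3 - 1 - s) + (s + 1) : ℕ) : ZMod (2 * n3)) = 0 := by
    rw [show (2 * n3 - 1 - s) + (s + 1) = 2 * n3 by omega, ZMod.natCast_self]
  push_cast at this ⊢
  linear_combination -this

lemma val_reflect [NeZero n3] {s : ℕ} (hs : s < n3) :
    (-1 - ((s : ℕ) : ZMod (2 * n3))).val = 2 * n3 - 1 - s := by
  rw [cast_reflect hs, ZMod.val_natCast, Nat.mod_eq_of_lt (by omega)]

lemma neg_natCast [NeZero n3] {s : ℕ} (hs : s < 2 * n3) :
    (-((s : ℕ) : ZMod (2 * n3))) = (((2 * n3 - s : ℕ)) : ZMod (2 * n3)) := by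
  have : (((2 * n3 - s) + s : ℕ) : ZMod (2 * n3)) = 0 := by
    rw [show (2 * n3 - s) + s = 2 * n3 by omega, ZMod.natCast_self]
  push_cast at this ⊢
  linear_combination -this

lemma extT_neg [NeZero n3] (A : Tensor n1 n2 n3) (m : ZMod (2 * n3)) :
    extT A (-m) = extT A m := by
  have hvlt : m.val < 2 * n3 := m.val_lt
  have hkey : -m = (((2 * n3 - m.val : ℕ)) : ZMod (2 * n3)) := by
    conv_lhs => rw [← cast_val m]
    exact neg_natCast hvlt
  rcases Nat.eq_zero_or_pos m.val with h0 | hpos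
  · have : m = 0 := by
      have := cast_val m; rw [h0] at this; simpa using this.symm
    rw [this, neg_zero]
  · have hv : (-m).val = 2 * n3 - m.val := by
      rw [hkey, ZMod.val_natCast, Nat.mod_eq_of_lt (by omega)]
    unfold extT
    rcases Nat.lt_trichotomy m.val n3 with h | h | h
    · rw [dif_neg (by omega), dif_pos (by omega), dif_pos h]
      refine funext fun a => funext fun b => tensor_congr A ?_ a b
      show 2 * n3 - (-m).val = m.val
      rw [hv]; omega
    · rw [dif_neg (by omega), dif_neg (by omega), dif_neg (by omega), dif_neg (by omega)]
    · rw [dif_pos (by rw [hv]; omega), dif_neg (by omega), dif_pos h]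
      exact funext fun a => funext fun b => tensor_congr A hv a b

/-- splitting a sum over `ZMod (2*n3)` into a `Fin n3`-indexed sum plus its reflection. -/
lemma sum_zmod_split [NeZero n3] {M : Type*} [AddCommMonoid M] (f : ZMod (2 * n3) → M) :
    ∑ m : ZMod (2 * n3), f m
      = ∑ s : Fin n3, (f (((s : ℕ) : ZMod (2 * n3))) + f (-1 - ((s : ℕ) : ZMod (2 * n3)))) := by
  have hn3 := Nat.pos_of_ne_zero (NeZero.ne n3)
  set g : Fin n3 ⊕ Fin n3 → ZMod (2 * n3) :=
    Sum.elim (fun s => ((s : ℕ) : ZMod (2 * n3))) (fun s => -1 - ((s : ℕ) : ZMod (2 * n3))) with hg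
  have hbij : Function.Bijective g := by
    constructor
    · rintro (x | x) (y | y) h <;> simp only [hg, Sum.elim_inl, Sum.elim_inr] at h
      · have := congrArg ZMod.val h
        rw [val_natCast_lt (by omega), val_natCast_lt (by omega)] at this
        exact congrArg Sum.inl (Fin.ext this)
      · have := congrArg ZMod.val h
        rw [val_natCast_lt (by omega), val_reflect y.isLt] at this
        exfalso; have := x.isLt; have := y.isLt; omega
      · have := congrArg ZMod.val h
        rw [val_natCast_lt (by omega), val_reflect x.isLt] at this
        exfalso; have := x.isLt; have := y.isLt; omega
      · have := congrArg ZMod.val h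
        rw [val_reflect x.isLt, val_reflect y.isLt] at this
        have := x.isLt; have := y.isLt
        exact congrArg Sum.inr (Fin.ext (by omega))
    · intro m
      have hvlt : m.val < 2 * n3 := m.val_lt
      rcases Nat.lt_or_ge m.val n3 with h | h
      · exact ⟨Sum.inl ⟨m.val, h⟩, cast_val m⟩
      · refine ⟨Sum.inr ⟨2 * n3 - 1 - m.val, by omega⟩, ?_⟩
        simp only [hg, Sum.elim_inr]
        rw [cast_reflect (show 2 * n3 - 1 - m.val < n3 by omega),
          show 2 * n3 - 1 - (2 * n3 - 1 - m.val) = m.val by omega]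
        exact cast_val m
  rw [← Function.Bijective.sum_comp hbij f, Fintype.sum_sum_type]
  rw [← Finset.sum_add_distrib]
  rfl

/-- scalar telescoping lemma. -/
lemma tele (g : ℕ → ℂ) : ∀ n i : ℕ, i < n →
    ∑ t ∈ Finset.Ico i n, (-1 : ℂ) ^ (t - i) * (g t + g (t + 1))
      = g i + (-1 : ℂ) ^ (n - 1 - i) * g n := by
  intro n
  induction n with
  | zero => intro i hi; omega
  | succ n ih =>
    intro i hi
    rcases Nat.lt_or_ge i n with h | h
    · rw [Finset.sum_Ico_succ_top (by omega), ih i h]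
      have h2 : (-1 : ℂ) ^ (n - 1 - i) + (-1 : ℂ) ^ (n - i) = 0 := by
        rw [show n - i = (n - 1 - i) + 1 by omega, pow_succ]; ring
      rw [show n + 1 - 1 - i = n - i by omega]
      linear_combination (g n) * h2
    · have hin : i = n := by omega
      subst hin
      rw [Finset.sum_Ico_succ_top (by omega), Finset.Ico_self, Finset.sum_empty]
      simp

lemma neg_one_pow_congr {e1 e2 : ℕ} (h : e1 % 2 = e2 % 2) : (-1 : ℂ) ^ e1 = (-1 : ℂ) ^ e2 := by
  rcases Nat.even_or_odd e1 with he | he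
  · rw [he.neg_one_pow, (Nat.even_iff.2 (by rw [← h]; exact Nat.even_iff.1 he)).neg_one_pow]
  · rw [he.neg_one_pow, (Nat.odd_iff.2 (by rw [← h]; exact Nat.odd_iff.1 he)).neg_one_pow]

lemma neg_one_pow_add_eq_zero {e1 e2 : ℕ} (h : (e1 + e2) % 2 = 1) :
    (-1 : ℂ) ^ e1 + (-1 : ℂ) ^ e2 = 0 := by
  rcases Nat.even_or_odd e1 with he | he
  · rw [he.neg_one_pow, (Nat.odd_iff.2 (by have := Nat.even_iff.1 he; omega)).neg_one_pow]; ring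
  · rw [he.neg_one_pow, (Nat.even_iff.2 (by have := Nat.odd_iff.1 he; omega)).neg_one_pow]; ring

/-- the slices of `tenT (circM c)` by telescoping. -/
lemma tenT_circM [NeZero n3] (c : ZMod (2 * n3) → Matrix (Fin n1) (Fin n2) ℂ) (i : Fin n3) :
    tenT (circM c) i
      = c (((i : ℕ) : ZMod (2 * n3)))
        + ((-1 : ℂ) ^ (n3 - 1 - (i : ℕ))) • c (((n3 : ℕ) : ZMod (2 * n3))) := by
  have hi := i.isLt
  funext a b
  show (∑ t : Fin n3, if (i : ℕ) ≤ (t : ℕ) then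
      (-1 : ℂ) ^ ((t : ℕ) - (i : ℕ)) * circM c (t, a) (⟨0, i.pos⟩, b) else 0) = _
  have hent : ∀ t : Fin n3, circM c (t, a) (⟨0, i.pos⟩, b)
      = c (((t : ℕ) : ZMod (2 * n3))) a b + c ((((t : ℕ) + 1 : ℕ) : ZMod (2 * n3))) a b := by
    intro t
    show (c (((t : ℕ) : ZMod (2 * n3)) - ((0 : ℕ) : ZMod (2 * n3)))
      + c (((t : ℕ) : ZMod (2 * n3)) + ((0 : ℕ) : ZMod (2 * n3)) + 1)) a b = _
    rw [Matrix.add_apply]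
    congr 2
    · push_cast; ring
    · push_cast; ring
  calc (∑ t : Fin n3, if (i : ℕ) ≤ (t : ℕ) then
        (-1 : ℂ) ^ ((t : ℕ) - (i : ℕ)) * circM c (t, a) (⟨0, i.pos⟩, b) else 0)
      = ∑ t : Fin n3, (if (i : ℕ) ≤ (t : ℕ) then
          (-1 : ℂ) ^ ((t : ℕ) - (i : ℕ)) * (c (((t : ℕ) : ZMod (2 * n3))) a b
            + c ((((t : ℕ) + 1 : ℕ) : ZMod (2 * n3))) a b) else 0) := by
        refine Finset.sum_congr rfl fun t _ => ?_
        rcases le_or_gt (i : ℕ) (t : ℕ) with h | h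
        · rw [if_pos h, if_pos h, hent t]
        · rw [if_neg (by omega), if_neg (by omega)]
    _ = ∑ u ∈ Finset.range n3, (fun u : ℕ => if (i : ℕ) ≤ u then
          (-1 : ℂ) ^ (u - (i : ℕ)) * (c ((u : ZMod (2 * n3))) a b
            + c (((u + 1 : ℕ) : ZMod (2 * n3))) a b) else 0) u := by
        exact Fin.sum_univ_eq_sum_range (fun u : ℕ => if (i : ℕ) ≤ u then
          (-1 : ℂ) ^ (u - (i : ℕ)) * (c ((u : ZMod (2 * n3))) a b
            + c (((u + 1 : ℕ) : ZMod (2 * n3))) a b) else 0) n3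
    _ = ∑ u ∈ Finset.Ico (i : ℕ) n3,
          (-1 : ℂ) ^ (u - (i : ℕ)) * (c ((u : ZMod (2 * n3))) a b
            + c (((u + 1 : ℕ) : ZMod (2 * n3))) a b) := by
        rw [← Finset.sum_filter]
        congr 1
        ext x
        simp only [Finset.mem_filter, Finset.mem_range, Finset.mem_Ico]
        omega
    _ = c (((i : ℕ) : ZMod (2 * n3))) a b
          + (-1 : ℂ) ^ (n3 - 1 - (i : ℕ)) * c (((n3 : ℕ) : ZMod (2 * n3))) a b :=
        tele (fun v : ℕ => c ((v : ZMod (2 * n3))) a b) n3 (i : ℕ) hi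
    _ = _ := by rw [Matrix.add_apply, Matrix.smul_apply, smul_eq_mul]

/-- reconstruction: `matT ∘ tenT` is the identity on symmetric circulant-type matrices. -/
lemma recon [NeZero n3] (c : ZMod (2 * n3) → Matrix (Fin n1) (Fin n2) ℂ)
    (hc : ∀ m, c (-m) = c m) : matT (tenT (circM c)) = circM c := by
  have hn3 := Nat.pos_of_ne_zero (NeZero.ne n3)
  rw [matT_eq_circM]
  have hD : ∀ m : ZMod (2 * n3), extT (tenT (circM c)) m
      = c m + ((-1 : ℂ) ^ (n3 - 1 + m.val)) • c (((n3 : ℕ) : ZMod (2 * n3))) := by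
    intro m
    have hvlt : m.val < 2 * n3 := m.val_lt
    rcases Nat.lt_trichotomy m.val n3 with h | h | h
    · rw [extT, dif_pos h, tenT_circM]
      show c (((m.val : ℕ) : ZMod (2 * n3)))
          + ((-1 : ℂ) ^ (n3 - 1 - m.val)) • c (((n3 : ℕ) : ZMod (2 * n3))) = _
      rw [cast_val m, neg_one_pow_congr (e1 := n3 - 1 - m.val) (e2 := n3 - 1 + m.val) (by omega)]
    · rw [extT, dif_neg (by omega), dif_neg (by omega)]
      have hm : m = ((n3 : ℕ) : ZMod (2 * n3)) := by
        conv_lhs => rw [← cast_val m]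
        rw [h]
      have hodd : (-1 : ℂ) ^ (n3 - 1 + m.val) = -1 := by
        rw [h]
        exact Odd.neg_one_pow (by rw [Nat.odd_iff]; omega)
      rw [hodd, hm, neg_smul, one_smul, add_neg_cancel]
    · rw [extT, dif_neg (by omega), dif_pos h, tenT_circM]
      show c ((((2 * n3 - m.val : ℕ)) : ZMod (2 * n3)))
          + ((-1 : ℂ) ^ (n3 - 1 - (2 * n3 - m.val))) • c (((n3 : ℕ) : ZMod (2 * n3))) = _
      have hneg : (((2 * n3 - m.val : ℕ)) : ZMod (2 * n3)) = -m := by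
        conv_rhs => rw [← cast_val m]
        rw [neg_natCast hvlt]
      rw [hneg, hc,
        neg_one_pow_congr (e1 := n3 - 1 - (2 * n3 - m.val)) (e2 := n3 - 1 + m.val) (by omega)]
  funext p q
  obtain ⟨i, a⟩ := p; obtain ⟨j, b⟩ := q
  have hi := i.isLt; have hj := j.isLt
  show (extT (tenT (circM c)) (((i:ℕ) : ZMod (2*n3)) - ((j:ℕ) : ZMod (2*n3)))
      + extT (tenT (circM c)) (((i:ℕ) : ZMod (2*n3)) + ((j:ℕ) : ZMod (2*n3)) + 1)) a b
    = (c (((i:ℕ) : ZMod (2*n3)) - ((j:ℕ) : ZMod (2*n3)))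
      + c (((i:ℕ) : ZMod (2*n3)) + ((j:ℕ) : ZMod (2*n3)) + 1)) a b
  rw [hD, hD]
  have hv2 : (((i:ℕ) : ZMod (2*n3)) + ((j:ℕ) : ZMod (2*n3)) + 1).val = (i:ℕ) + (j:ℕ) + 1 :=
    val_addone hi hj
  have hv1 : ((((i:ℕ) : ZMod (2*n3)) - ((j:ℕ) : ZMod (2*n3))).val) % 2 = ((i:ℕ) + (j:ℕ)) % 2 := by
    rcases le_or_gt (j:ℕ) (i:ℕ) with h | h
    · rw [val_sub_le hi hj h]; omega
    · rw [val_sub_lt hi hj h]; omega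
  have hzero : (-1 : ℂ) ^ (n3 - 1 + (((i:ℕ) : ZMod (2*n3)) - ((j:ℕ) : ZMod (2*n3))).val)
      + (-1 : ℂ) ^ (n3 - 1 + (((i:ℕ) : ZMod (2*n3)) + ((j:ℕ) : ZMod (2*n3)) + 1).val) = 0 := by
    apply neg_one_pow_add_eq_zero
    rw [hv2]; omega
  have hM : c (((i:ℕ) : ZMod (2*n3)) - ((j:ℕ) : ZMod (2*n3)))
        + ((-1 : ℂ) ^ (n3 - 1 + (((i:ℕ) : ZMod (2*n3)) - ((j:ℕ) : ZMod (2*n3))).val))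
          • c (((n3 : ℕ) : ZMod (2 * n3)))
        + (c (((i:ℕ) : ZMod (2*n3)) + ((j:ℕ) : ZMod (2*n3)) + 1)
          + ((-1 : ℂ) ^ (n3 - 1 + (((i:ℕ) : ZMod (2*n3)) + ((j:ℕ) : ZMod (2*n3)) + 1).val))
            • c (((n3 : ℕ) : ZMod (2 * n3))))
      = c (((i:ℕ) : ZMod (2*n3)) - ((j:ℕ) : ZMod (2*n3)))
        + c (((i:ℕ) : ZMod (2*n3)) + ((j:ℕ) : ZMod (2*n3)) + 1) := by
    rw [show ∀ x y z w : Matrix (Fin n1) (Fin n2) ℂ, x + y + (z + w) = (x + z) + (y + w) from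
      fun x y z w => by abel]
    rw [← add_smul, hzero, zero_smul, add_zero]
  rw [hM]

/-- the convolution symbol of a product. -/
def convS [NeZero n3] (A : Tensor n1 n2 n3) (B : Tensor n2 l n3) :
    ZMod (2 * n3) → Matrix (Fin n1) (Fin l) ℂ := fun m =>
  ∑ p : ZMod (2 * n3), extT A p * extT B (m - p)

lemma convS_neg [NeZero n3] (A : Tensor n1 n2 n3) (B : Tensor n2 l n3) (m : ZMod (2 * n3)) :
    convS A B (-m) = convS A B m := by
  unfold convS
  rw [← Equiv.sum_comp (Equiv.neg (ZMod (2 * n3)))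
    (fun p => extT A p * extT B (m - p))]
  refine Finset.sum_congr rfl fun p _ => ?_
  simp only [Equiv.neg_apply]
  rw [extT_neg, show -m - p = -(m - -p) by ring, extT_neg]

lemma half_sum [NeZero n3] (A : Tensor n1 n2 n3) (B : Tensor n2 l n3) (x y : ZMod (2 * n3)) :
    convS A B (x - y) + convS A B (x + y + 1)
      = ∑ s : Fin n3,
          ((extT A (x - ((s : ℕ) : ZMod (2 * n3))) + extT A (x + ((s : ℕ) : ZMod (2 * n3)) + 1))
            * (extT B (((s : ℕ) : ZMod (2 * n3)) - y)
              + extT B (((s : ℕ) : ZMod (2 * n3)) + y + 1))) := by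
  have e1 : convS A B (x - y)
      = ∑ s : Fin n3, (extT A (x - ((s : ℕ) : ZMod (2 * n3)))
            * extT B (((s : ℕ) : ZMod (2 * n3)) - y)
          + extT A (x + ((s : ℕ) : ZMod (2 * n3)) + 1)
            * extT B (((s : ℕ) : ZMod (2 * n3)) + y + 1)) := by
    unfold convS
    rw [← Equiv.sum_comp (Equiv.subLeft x) (fun p => extT A p * extT B (x - y - p))]
    rw [sum_zmod_split (fun p => extT A (Equiv.subLeft x p) * extT B (x - y - Equiv.subLeft x p))]
    refine Finset.sum_congr rfl fun s _ => ?_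
    simp only [Equiv.subLeft_apply]
    rw [show x - (-1 - ((s : ℕ) : ZMod (2 * n3))) = x + ((s : ℕ) : ZMod (2 * n3)) + 1 by ring,
      show x - y - (x - ((s : ℕ) : ZMod (2 * n3))) = ((s : ℕ) : ZMod (2 * n3)) - y by ring,
      show x - y - (x + ((s : ℕ) : ZMod (2 * n3)) + 1)
        = -(((s : ℕ) : ZMod (2 * n3)) + y + 1) by ring, extT_neg]
  have e2 : convS A B (x + y + 1)
      = ∑ s : Fin n3, (extT A (x - ((s : ℕ) : ZMod (2 * n3)))
            * extT B (((s : ℕ) : ZMod (2 * n3)) + y + 1)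
          + extT A (x + ((s : ℕ) : ZMod (2 * n3)) + 1)
            * extT B (((s : ℕ) : ZMod (2 * n3)) - y)) := by
    unfold convS
    rw [← Equiv.sum_comp (Equiv.subLeft x) (fun p => extT A p * extT B (x + y + 1 - p))]
    rw [sum_zmod_split
      (fun p => extT A (Equiv.subLeft x p) * extT B (x + y + 1 - Equiv.subLeft x p))]
    refine Finset.sum_congr rfl fun s _ => ?_
    simp only [Equiv.subLeft_apply]
    rw [show x - (-1 - ((s : ℕ) : ZMod (2 * n3))) = x + ((s : ℕ) : ZMod (2 * n3)) + 1 by ring,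
      show x + y + 1 - (x - ((s : ℕ) : ZMod (2 * n3)))
        = ((s : ℕ) : ZMod (2 * n3)) + y + 1 by ring,
      show x + y + 1 - (x + ((s : ℕ) : ZMod (2 * n3)) + 1)
        = -(((s : ℕ) : ZMod (2 * n3)) - y) by ring, extT_neg]
  rw [e1, e2, ← Finset.sum_add_distrib]
  refine Finset.sum_congr rfl fun s _ => ?_
  rw [Matrix.add_mul, Matrix.mul_add, Matrix.mul_add]
  abel

lemma matT_mul_eq [NeZero n3] (A : Tensor n1 n2 n3) (B : Tensor n2 l n3) :
    matT A * matT B = circM (convS A B) := by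
  funext p q
  obtain ⟨i, a⟩ := p; obtain ⟨j, b⟩ := q
  rw [Matrix.mul_apply, Fintype.sum_prod_type]
  show (∑ s : Fin n3, ∑ e : Fin n2, matT A (i, a) (s, e) * matT B (s, e) (j, b))
    = (convS A B (((i:ℕ) : ZMod (2*n3)) - ((j:ℕ) : ZMod (2*n3)))
      + convS A B (((i:ℕ) : ZMod (2*n3)) + ((j:ℕ) : ZMod (2*n3)) + 1)) a b
  rw [half_sum A B, Matrix.sum_apply]
  refine Finset.sum_congr rfl fun s _ => ?_
  rw [matT_eq_circM A, matT_eq_circM B, Matrix.mul_apply]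
  rfl

lemma matT_cmul [NeZero n3] (A : Tensor n1 n2 n3) (B : Tensor n2 l n3) :
    matT (cmul A B) = matT A * matT B := by
  show matT (tenT (matT A * matT B)) = matT A * matT B
  rw [matT_mul_eq A B]
  exact recon (convS A B) (convS_neg A B)

lemma ten_matT [NeZero n3] (A : Tensor n1 n2 n3) : tenT (matT A) = A := by
  have hn3 := Nat.pos_of_ne_zero (NeZero.ne n3)
  rw [matT_eq_circM]
  funext i
  rw [tenT_circM]
  have hvi : (((i : ℕ) : ZMod (2 * n3))).val = (i : ℕ) :=
    val_natCast_lt (by have := i.isLt; omega)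
  have hvn : (((n3 : ℕ) : ZMod (2 * n3))).val = n3 := val_natCast_lt (by omega)
  have h1 : extT A (((i : ℕ) : ZMod (2 * n3))) = A i := by
    rw [extT, dif_pos (show (((i : ℕ) : ZMod (2 * n3))).val < n3 by rw [hvi]; exact i.isLt)]
    exact funext fun a => funext fun b => tensor_congr A hvi a b
  have h2 : extT A (((n3 : ℕ) : ZMod (2 * n3))) = 0 := by
    rw [extT, dif_neg (by rw [hvn]; omega), dif_neg (by rw [hvn]; omega)]
  rw [h1, h2, smul_zero, add_zero]

lemma matT_inj [NeZero n3] {A B : Tensor n1 n2 n3} (h : matT A = matT B) : A = B := by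
  rw [← ten_matT A, ← ten_matT B, h]

lemma matT_idT {n : ℕ} [NeZero n3] : matT (idT (n := n) (n3 := n3)) = 1 := by
  funext p q
  obtain ⟨i, a⟩ := p; obtain ⟨j, b⟩ := q
  have hi := i.isLt; have hj := j.isLt
  show idT (⟨(i:ℕ) - (j:ℕ) + ((j:ℕ) - (i:ℕ)), by omega⟩ : Fin n3) a b
      + (if h : (i:ℕ) + (j:ℕ) + 2 ≤ n3 then idT (⟨(i:ℕ) + (j:ℕ) + 1, by omega⟩ : Fin n3) a b
        else if h2 : n3 ≤ (i:ℕ) + (j:ℕ) then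
          idT (⟨2 * n3 - ((i:ℕ) + (j:ℕ)) - 1, by omega⟩ : Fin n3) a b
        else 0) = (1 : Matrix (Fin n3 × Fin n) (Fin n3 × Fin n) ℂ) (i, a) (j, b)
  have hH : (if h : (i:ℕ) + (j:ℕ) + 2 ≤ n3 then idT (⟨(i:ℕ) + (j:ℕ) + 1, by omega⟩ : Fin n3) a b
        else if h2 : n3 ≤ (i:ℕ) + (j:ℕ) then
          idT (⟨2 * n3 - ((i:ℕ) + (j:ℕ)) - 1, by omega⟩ : Fin n3) a b
        else 0) = 0 := by
    rcases Nat.lt_trichotomy ((i:ℕ) + (j:ℕ) + 1) n3 with h | h | h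
    · rw [dif_pos (by omega)]
      show (if (i:ℕ) + (j:ℕ) + 1 = 0 then (1 : Matrix (Fin n) (Fin n) ℂ) else 0) a b = 0
      rw [if_neg (by omega)]
      rfl
    · rw [dif_neg (by omega), dif_neg (by omega)]
    · rw [dif_neg (by omega), dif_pos (by omega)]
      show (if 2 * n3 - ((i:ℕ) + (j:ℕ)) - 1 = 0 then (1 : Matrix (Fin n) (Fin n) ℂ) else 0) a b
        = 0
      rw [if_neg (by omega)]
      rfl
  rw [hH, add_zero]
  rcases eq_or_ne i j with h | h
  · subst h
    show (if (i:ℕ) - (i:ℕ) + ((i:ℕ) - (i:ℕ)) = 0 then (1 : Matrix (Fin n) (Fin n) ℂ) else 0) a b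
      = _
    rw [if_pos (by omega), Matrix.one_apply, Matrix.one_apply]
    by_cases hab : a = b
    · rw [if_pos hab, if_pos (by rw [hab])]
    · rw [if_neg hab, if_neg (by simp [Prod.ext_iff, hab])]
  · show (if (i:ℕ) - (j:ℕ) + ((j:ℕ) - (i:ℕ)) = 0 then (1 : Matrix (Fin n) (Fin n) ℂ) else 0) a b
      = _
    have hij : (i:ℕ) ≠ (j:ℕ) := fun hh => h (Fin.ext hh)
    rw [if_neg (by omega), Matrix.one_apply, if_neg (by simp [Prod.ext_iff]; intro hh; exact absurd hh h)]
    rfl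

lemma matT_cpow {n : ℕ} [NeZero n3] (A : Tensor n n n3) (m : ℕ) :
    matT (cpow A m) = matT A ^ m := by
  induction m with
  | zero => rw [pow_zero]; exact matT_idT
  | succ m ih => rw [show cpow A (m + 1) = cmul (cpow A m) A from rfl, matT_cmul, ih, pow_succ]

section MatrixKey

open Matrix

variable {ι : Type*} [Fintype ι] [DecidableEq ι]

lemma mulVec_ext {κ : Type*} [Fintype κ] [DecidableEq κ] {P Q : Matrix ι κ ℂ}
    (h : ∀ v, P *ᵥ v = Q *ᵥ v) : P = Q := by
  ext x y
  have := congrFun (h (Pi.single y 1)) x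
  simpa using this

lemma mulVecLin_pow (M : Matrix ι ι ℂ) (j : ℕ) :
    (M ^ j).mulVecLin = M.mulVecLin ^ j := by
  induction j with
  | zero => rw [pow_zero, pow_zero, Matrix.mulVecLin_one]; rfl
  | succ j ih => rw [pow_succ, pow_succ, Matrix.mulVecLin_mul, ih, Module.End.mul_eq_comp]

lemma rank_eq_finrank (M : Matrix ι ι ℂ) (j : ℕ) :
    (M ^ j).rank = Module.finrank ℂ (LinearMap.range (M.mulVecLin ^ j)) := by
  rw [← mulVecLin_pow]; rfl

lemma range_stab (M : Matrix ι ι ℂ) (k : ℕ) (h : (M ^ k).rank = (M ^ (k + 1)).rank) :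
    ∀ j, k ≤ j →
      LinearMap.range (M.mulVecLin ^ j) = LinearMap.range (M.mulVecLin ^ k) := by
  set f := M.mulVecLin with hf
  have hle : LinearMap.range (f ^ (k + 1)) ≤ LinearMap.range (f ^ k) := by
    rw [pow_succ, Module.End.mul_eq_comp]
    exact LinearMap.range_comp_le_range _ _
  have heq : LinearMap.range (f ^ (k + 1)) = LinearMap.range (f ^ k) := by
    apply Submodule.eq_of_le_of_finrank_le hle
    rw [← rank_eq_finrank M k, ← rank_eq_finrank M (k + 1), h]
  intro j hj
  refine Nat.le_induction rfl (fun n hn ih => ?_) j hj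
  rw [pow_succ', Module.End.mul_eq_comp, LinearMap.range_comp, ih, ← LinearMap.range_comp,
    ← Module.End.mul_eq_comp, ← pow_succ', heq]

lemma key_a (M N : Matrix ι ι ℂ) (k : ℕ) (hrk : (M ^ k).rank = (M ^ (k + 1)).rank)
    (hN : M ^ (2 * k + 1) * N * M ^ (2 * k + 1) = M ^ (2 * k + 1)) :
    M ^ (2 * k + 1) * N * M ^ k = M ^ k := by
  apply mulVec_ext; intro v
  have hmem : (M ^ k) *ᵥ v ∈ LinearMap.range ((M ^ (2 * k + 1)).mulVecLin) := by
    rw [mulVecLin_pow, range_stab M k hrk (2 * k + 1) (by omega), ← mulVecLin_pow]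
    exact ⟨v, by simp [Matrix.mulVecLin_apply]⟩
  obtain ⟨y, hy⟩ := hmem
  rw [Matrix.mulVecLin_apply] at hy
  calc (M ^ (2 * k + 1) * N * M ^ k) *ᵥ v
      = M ^ (2 * k + 1) *ᵥ (N *ᵥ (M ^ k *ᵥ v)) := by
        rw [Matrix.mulVec_mulVec, Matrix.mulVec_mulVec]
    _ = M ^ (2 * k + 1) *ᵥ (N *ᵥ (M ^ (2 * k + 1) *ᵥ y)) := by rw [hy]
    _ = (M ^ (2 * k + 1) * N * M ^ (2 * k + 1)) *ᵥ y := by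
        rw [Matrix.mulVec_mulVec, Matrix.mulVec_mulVec]
    _ = M ^ (2 * k + 1) *ᵥ y := by rw [hN]
    _ = M ^ k *ᵥ v := hy

lemma key_b (M N : Matrix ι ι ℂ) (k : ℕ) (hrk : (M ^ k).rank = (M ^ (k + 1)).rank)
    (hN : M ^ (2 * k + 1) * N * M ^ (2 * k + 1) = M ^ (2 * k + 1)) :
    M ^ k * N * M ^ (2 * k + 1) = M ^ k := by
  have hrkT : (Mᵀ ^ k).rank = (Mᵀ ^ (k + 1)).rank := by
    rw [← Matrix.transpose_pow, ← Matrix.transpose_pow, Matrix.rank_transpose,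
      Matrix.rank_transpose]
    exact hrk
  have hNT : Mᵀ ^ (2 * k + 1) * Nᵀ * Mᵀ ^ (2 * k + 1) = Mᵀ ^ (2 * k + 1) := by
    have h := congrArg Matrix.transpose hN
    rw [Matrix.transpose_mul, Matrix.transpose_mul, Matrix.transpose_pow, ← mul_assoc] at h
    exact h
  have hT := key_a Mᵀ Nᵀ k hrkT hNT
  have h2 := congrArg Matrix.transpose hT
  rw [Matrix.transpose_mul, Matrix.transpose_mul, ← Matrix.transpose_pow,
    ← Matrix.transpose_pow, Matrix.transpose_transpose, Matrix.transpose_transpose,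
    Matrix.transpose_transpose, ← mul_assoc] at h2
  exact h2

lemma matrix_key (M N : Matrix ι ι ℂ) (k : ℕ)
    (hrk : (M ^ k).rank = (M ^ (k + 1)).rank)
    (hN : M ^ (2 * k + 1) * N * M ^ (2 * k + 1) = M ^ (2 * k + 1)) :
    M ^ (k + 1) * (M ^ k * N * M ^ k) = M ^ k ∧
      (M ^ k * N * M ^ k) * M * (M ^ k * N * M ^ k) = M ^ k * N * M ^ k ∧
      M * (M ^ k * N * M ^ k) = (M ^ k * N * M ^ k) * M := by
  have ha := key_a M N k hrk hN
  have hb := key_b M N k hrk hN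
  set K := M ^ k with hK
  have hsucc1 : M ^ (k + 1) = M * K := by rw [hK]; exact pow_succ' M k
  have hsucc2 : M ^ (k + 1) = K * M := by rw [hK]; exact pow_succ M k
  have hsplit1 : M ^ (2 * k + 1) = M * (K * K) := by
    rw [hK, ← pow_add, ← pow_succ']
    congr 1
    omega
  have hsplit2 : M ^ (2 * k + 1) = K * K * M := by
    rw [hK, ← pow_add, ← pow_succ]
    congr 1
    omega
  have ha' : M * (K * K) * N * K = K := by rw [← hsplit1]; exact ha
  have hb' : K * N * (K * K * M) = K := by rw [← hsplit2]; exact hb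
  have G1 : M ^ (k + 1) * (K * N * K) = K := by
    rw [hsucc1]
    calc M * K * (K * N * K) = M * (K * K) * N * K := by noncomm_ring
      _ = K := ha'
  have G2 : (K * N * K) * M ^ (k + 1) = K := by
    rw [hsucc2]
    calc (K * N * K) * (K * M) = K * N * (K * K * M) := by noncomm_ring
      _ = K := hb'
  have Gmid : (K * N * K) * M * (K * N * K) = K * N * K := by
    calc (K * N * K) * M * (K * N * K)
        = (K * N) * ((K * M) * (K * N * K)) := by noncomm_ring
      _ = (K * N) * (M ^ (k + 1) * (K * N * K)) := by rw [hsucc2]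
      _ = (K * N) * K := by rw [G1]
      _ = K * N * K := by noncomm_ring
  have h4 : M * (K * N * K) * K = K := by
    calc M * (K * N * K) * K
        = M * (K * N * K) * (M ^ (k + 1) * (K * N * K)) := by rw [G1]
      _ = M * ((K * N * K) * M ^ (k + 1)) * (K * N * K) := by noncomm_ring
      _ = M * K * (K * N * K) := by rw [G2]
      _ = M ^ (k + 1) * (K * N * K) := by rw [hsucc1]
      _ = K := G1
  have h5 : K * (K * N * K) * M = K := by
    calc K * (K * N * K) * M
        = ((K * N * K) * M ^ (k + 1)) * (K * N * K) * M := by rw [G2]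
      _ = (K * N * K) * (M ^ (k + 1) * (K * N * K)) * M := by noncomm_ring
      _ = (K * N * K) * K * M := by rw [G1]
      _ = (K * N * K) * M ^ (k + 1) := by rw [hsucc2]; noncomm_ring
      _ = K := G2
  have c1 : M * (K * N * K) = M * (K * N * K) * ((K * N * K) * M) := by
    calc M * (K * N * K)
        = M * (K * N * (K * (K * N * K) * M)) := by rw [h5]
      _ = M * (K * N * K) * ((K * N * K) * M) := by noncomm_ring
  have c2 : (K * N * K) * M = M * (K * N * K) * ((K * N * K) * M) := by
    calc (K * N * K) * M
        = (M * (K * N * K) * K) * N * K * M := by rw [h4]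
      _ = M * (K * N * K) * ((K * N * K) * M) := by noncomm_ring
  exact ⟨G1, Gmid, c1.trans c2.symm⟩

end MatrixKey

end CProof

open Tensor

open CProof in
theorem stmt12 {n n3 : ℕ} (A : Tensor n n n3) (k : ℕ) (hk : IsIndex A k)
    (Y : Tensor n n n3)
    (hY : cmul (cmul (cpow A (2 * k + 1)) Y) (cpow A (2 * k + 1)) = cpow A (2 * k + 1)) :
    IsDrazin A k (cmul (cmul (cpow A k) Y) (cpow A k)) ∧
      ∀ P : Tensor n n n3, IsMP (cpow A (2 * k + 1)) P →
        IsDrazin A k (cmul (cmul (cpow A k) P) (cpow A k)) := by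
  have key : ∀ W : Tensor n n n3,
      cmul (cmul (cpow A (2 * k + 1)) W) (cpow A (2 * k + 1)) = cpow A (2 * k + 1) →
        IsDrazin A k (cmul (cmul (cpow A k) W) (cpow A k)) := by
    intro W hW
    rcases Nat.eq_zero_or_pos n3 with h0 | hpos
    · subst h0
      exact ⟨funext fun i => i.elim0, funext fun i => i.elim0, funext fun i => i.elim0⟩
    · haveI : NeZero n3 := ⟨hpos.ne'⟩
      have hW' : matT A ^ (2 * k + 1) * matT W * matT A ^ (2 * k + 1)
          = matT A ^ (2 * k + 1) := by
        have h := congrArg matT hW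
        simp only [matT_cmul, matT_cpow] at h
        exact h
      obtain ⟨g1, g2, g3⟩ := matrix_key (matT A) (matT W) k hk.1 hW'
      refine ⟨matT_inj ?_, matT_inj ?_, matT_inj ?_⟩
      · simp only [matT_cmul, matT_cpow]
        exact g1
      · simp only [matT_cmul, matT_cpow]
        exact g2
      · simp only [matT_cmul, matT_cpow]
        exact g3
  exact ⟨key Y hY, fun P hP => key P hP.1⟩
end
end

section
/- Let A ∈ ℂ^{n×n×n3} with ind(A) = k ≥ 1, and suppose A^k = Q *_c D *_c R, where Q ∈ ℂ^{n×r×n3}, D ∈ ℂ^{r×r×n3} is an invertible F-diagonal tensor, R ∈ ℂ^{r×n×n3}, and the tensors Q^H *_c Q and R *_c R^H are invertible (a C-QDR decomposition of A^k). Then the tensor R *_c A *_c Q is invertible and the Drazin inverse of A is A^D = Q *_c (R *_c A *_c Q)^{-1} *_c R. -/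
noncomputable section

open Tensor

namespace Aux
variable {n3 : ℕ}

lemma sum_ind (m : ℕ) (g : Fin n3 → ℂ) :
    ∑ t : Fin n3, (if t.1 = m then g t else 0) =
      if hm : m < n3 then g ⟨m, hm⟩ else 0 := by
  split_ifs with hm
  · rw [Finset.sum_eq_single (⟨m, hm⟩ : Fin n3)]
    · simp
    · intro t _ ht
      simp only [ite_eq_right_iff]
      intro h; exact absurd (Fin.ext h) ht
    · simp
  · apply Finset.sum_eq_zero
    intro t _
    simp only [ite_eq_right_iff]
    intro h; omega

/-- stencil weights of the tridiagonal generator. -/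
def wst (n3 i j : ℕ) : ℂ :=
  (if i + 1 = j then 1 else 0) + (if j + 1 = i then 1 else 0) +
    (if i = j ∧ (i = 0 ∨ i + 1 = n3) then 1 else 0)

lemma wst_symm (i j : ℕ) : wst n3 i j = wst n3 j i := by
  unfold wst
  have h3 : (i = j ∧ (i = 0 ∨ i + 1 = n3)) ↔ (j = i ∧ (j = 0 ∨ j + 1 = n3)) := by omega
  rw [if_congr h3 rfl rfl]
  ring

lemma stencil_eval (g : Fin n3 → ℂ) (p : Fin n3) :
    ∑ t : Fin n3, wst n3 p.1 t.1 * g t =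
      (if h : p.1 + 1 < n3 then g ⟨p.1 + 1, h⟩ else 0) +
      (if h : 1 ≤ p.1 then g ⟨p.1 - 1, lt_of_le_of_lt (Nat.sub_le _ _) p.2⟩ else 0) +
      (if p.1 = 0 ∨ p.1 + 1 = n3 then g p else 0) := by
  unfold wst
  simp only [add_mul]
  rw [Finset.sum_add_distrib, Finset.sum_add_distrib]
  congr 1
  · congr 1
    · rw [show (∑ t : Fin n3, (if p.1 + 1 = t.1 then (1:ℂ) else 0) * g t)
          = ∑ t : Fin n3, (if t.1 = p.1 + 1 then g t else 0) by
        apply Finset.sum_congr rfl; intro t _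
        by_cases h : p.1 + 1 = t.1
        · rw [if_pos h, if_pos h.symm, one_mul]
        · rw [if_neg h, if_neg (by omega : ¬ t.1 = p.1 + 1), zero_mul]]
      rw [sum_ind]
    · rw [show (∑ t : Fin n3, (if t.1 + 1 = p.1 then (1:ℂ) else 0) * g t)
          = ∑ t : Fin n3, (if t.1 = p.1 - 1 ∧ 1 ≤ p.1 then g t else 0) by
        apply Finset.sum_congr rfl; intro t _
        by_cases h : t.1 + 1 = p.1
        · rw [if_pos h, if_pos (by omega : t.1 = p.1 - 1 ∧ 1 ≤ p.1), one_mul]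
        · rw [if_neg h, if_neg (by omega : ¬ (t.1 = p.1 - 1 ∧ 1 ≤ p.1)), zero_mul]]
      by_cases hp : 1 ≤ p.1
      · rw [show (∑ t : Fin n3, (if t.1 = p.1 - 1 ∧ 1 ≤ p.1 then g t else 0))
            = ∑ t : Fin n3, (if t.1 = p.1 - 1 then g t else 0) by
          apply Finset.sum_congr rfl; intro t _
          exact if_congr (by omega) rfl rfl]
        rw [sum_ind, dif_pos hp]
        have h1 : p.1 - 1 < n3 := lt_of_le_of_lt (Nat.sub_le _ _) p.2
        rw [dif_pos h1]
      · rw [dif_neg hp]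
        apply Finset.sum_eq_zero
        intro t _
        rw [if_neg (by omega : ¬ (t.1 = p.1 - 1 ∧ 1 ≤ p.1))]
  · by_cases hb : p.1 = 0 ∨ p.1 + 1 = n3
    · rw [show (∑ t : Fin n3, (if p.1 = t.1 ∧ (p.1 = 0 ∨ p.1 + 1 = n3) then (1:ℂ) else 0) * g t)
          = ∑ t : Fin n3, (if t.1 = p.1 then g t else 0) by
        apply Finset.sum_congr rfl; intro t _
        by_cases h : t.1 = p.1
        · rw [if_pos (by omega : p.1 = t.1 ∧ (p.1 = 0 ∨ p.1 + 1 = n3)), if_pos h, one_mul]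
        · rw [if_neg (by omega : ¬ (p.1 = t.1 ∧ (p.1 = 0 ∨ p.1 + 1 = n3))), if_neg h, zero_mul]]
      rw [sum_ind, dif_pos p.2, if_pos hb, Fin.eta]
    · rw [if_neg hb]
      apply Finset.sum_eq_zero
      intro t _
      rw [if_neg (by omega : ¬ (p.1 = t.1 ∧ (p.1 = 0 ∨ p.1 + 1 = n3))), zero_mul]

/-- The commutation generator matrix `C₁ ⊗ I`. -/
def Cst (n3 m : ℕ) : Matrix (Fin n3 × Fin m) (Fin n3 × Fin m) ℂ :=
  fun p q => if p.2 = q.2 then wst n3 p.1 q.1 else 0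

lemma Cst_mul_apply {n1 n2 : ℕ} (M : Matrix (Fin n3 × Fin n1) (Fin n3 × Fin n2) ℂ)
    (p : Fin n3) (a : Fin n1) (q : Fin n3) (b : Fin n2) :
    (Cst n3 n1 * M) (p, a) (q, b) = ∑ t : Fin n3, wst n3 p.1 t.1 * M (t, a) (q, b) := by
  rw [Matrix.mul_apply]
  rw [Fintype.sum_prod_type]
  apply Finset.sum_congr rfl
  intro t _
  rw [Finset.sum_eq_single a]
  · simp [Cst]
  · intro c _ hc
    simp [Cst, Ne.symm hc]
  · simp

lemma mul_Cst_apply {n1 n2 : ℕ} (M : Matrix (Fin n3 × Fin n1) (Fin n3 × Fin n2) ℂ)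
    (p : Fin n3) (a : Fin n1) (q : Fin n3) (b : Fin n2) :
    (M * Cst n3 n2) (p, a) (q, b) = ∑ t : Fin n3, wst n3 q.1 t.1 * M (p, a) (t, b) := by
  rw [Matrix.mul_apply]
  rw [Fintype.sum_prod_type]
  apply Finset.sum_congr rfl
  intro t _
  rw [Finset.sum_eq_single b]
  · rw [show Cst n3 n2 (t, b) (q, b) = wst n3 t.1 q.1 by simp [Cst], wst_symm, mul_comm]
  · intro c _ hc
    simp [Cst, hc]
  · simp

/-- Even reflected-periodic extension of a finitely supported sequence. -/
def extC (n3 : ℕ) (f : ℕ → ℂ) (x : ℤ) : ℂ :=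
  f (min (x.natAbs % (2 * n3)) (2 * n3 - x.natAbs % (2 * n3)))

lemma extC_neg (f : ℕ → ℂ) (x : ℤ) : extC n3 f (-x) = extC n3 f x := by
  simp [extC]

lemma extC_natCast (f : ℕ → ℂ) (x : ℕ) (hx : x < 2 * n3) :
    extC n3 f (x : ℤ) = f (min x (2 * n3 - x)) := by
  simp [extC, Nat.mod_eq_of_lt hx]

lemma extC_refl (f : ℕ → ℂ) (d : ℕ) (hd : d ≤ n3) :
    extC n3 f ((n3 : ℤ) + d) = extC n3 f ((n3 : ℤ) - d) := by
  rcases Nat.eq_or_lt_of_le hd with h | h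
  · rw [h]
    rw [show ((n3:ℤ) + (n3:ℕ)) = ((2 * n3 : ℕ) : ℤ) by push_cast; ring,
        show ((n3:ℤ) - (n3:ℕ)) = ((0 : ℕ) : ℤ) by push_cast; ring]
    rcases Nat.eq_zero_or_pos n3 with h0 | h0
    · simp [h0]
    · simp only [extC, Nat.cast_ofNat, Nat.cast_mul, Int.natAbs_mul, Int.natAbs_natCast,
        Nat.cast_zero, Int.natAbs_zero, Nat.zero_mod, Nat.mod_self]
      norm_num
  · rw [show ((n3:ℤ) + d) = ((n3 + d : ℕ) : ℤ) by push_cast; ring,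
        show ((n3:ℤ) - d) = ((n3 - d : ℕ) : ℤ) by push_cast [Nat.cast_sub (le_of_lt h)]; ring]
    rw [extC_natCast _ _ (by omega), extC_natCast _ _ (by omega)]
    congr 1
    omega

/-- The slice sequence of a tensor at a fixed matrix position. -/
def sliceF {n1 n2 : ℕ} (A : Tensor n1 n2 n3) (a : Fin n1) (b : Fin n2) : ℕ → ℂ :=
  fun x => if hx : x < n3 then A ⟨x, hx⟩ a b else 0

lemma matT_apply_ext {n1 n2 : ℕ} (A : Tensor n1 n2 n3)
    (p : Fin n3) (a : Fin n1) (q : Fin n3) (b : Fin n2) :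
    matT A (p, a) (q, b) =
      extC n3 (sliceF A a b) ((p : ℤ) - q) + extC n3 (sliceF A a b) ((p : ℤ) + q + 1) := by
  have hp := p.2
  have hq := q.2
  unfold matT
  dsimp only
  congr 1
  · -- Toeplitz part
    rw [show ((p:ℤ) - q) = (p.1 : ℤ) - q.1 from rfl]
    rcases le_or_gt q.1 p.1 with h | h
    · rw [show ((p.1:ℤ) - q.1) = ((p.1 - q.1 : ℕ) : ℤ) by omega]
      rw [extC_natCast _ _ (by omega)]
      rw [show min (p.1 - q.1) (2 * n3 - (p.1 - q.1)) = p.1 - q.1 by omega]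
      simp only [sliceF]
      rw [dif_pos (by omega : p.1 - q.1 < n3)]
      congr 1
      exact Fin.ext (show p.1 - q.1 + (q.1 - p.1) = p.1 - q.1 by omega)
    · rw [show ((p.1:ℤ) - q.1) = -((q.1 - p.1 : ℕ) : ℤ) by omega, extC_neg]
      rw [extC_natCast _ _ (by omega)]
      rw [show min (q.1 - p.1) (2 * n3 - (q.1 - p.1)) = q.1 - p.1 by omega]
      simp only [sliceF]
      rw [dif_pos (by omega : q.1 - p.1 < n3)]
      congr 1
      exact Fin.ext (show p.1 - q.1 + (q.1 - p.1) = q.1 - p.1 by omega)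
  · -- Hankel part
    rw [show ((p:ℤ) + q + 1) = ((p.1 + q.1 + 1 : ℕ) : ℤ) by push_cast; ring]
    rw [extC_natCast _ _ (by omega)]
    split_ifs with h1 h2
    · rw [show min (p.1 + q.1 + 1) (2 * n3 - (p.1 + q.1 + 1)) = p.1 + q.1 + 1 by omega]
      simp only [sliceF]
      rw [dif_pos (by omega : p.1 + q.1 + 1 < n3)]
    · rw [show min (p.1 + q.1 + 1) (2 * n3 - (p.1 + q.1 + 1)) = 2 * n3 - (p.1 + q.1) - 1 by omega]
      simp only [sliceF]
      rw [dif_pos (by omega : 2 * n3 - (p.1 + q.1) - 1 < n3)]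
    · -- p + q + 1 = n3
      rw [show min (p.1 + q.1 + 1) (2 * n3 - (p.1 + q.1 + 1)) = n3 by omega]
      simp only [sliceF]
      rw [dif_neg (by omega : ¬ n3 < n3)]

lemma extC_arg (f : ℕ → ℂ) {x y : ℤ} (h : x = y) : extC n3 f x = extC n3 f y := by rw [h]

lemma sideL (f : ℕ → ℂ) (hn : 2 ≤ n3) (p q : ℕ) (hp : p < n3) (hq : q < n3) :
    ((if _h : p + 1 < n3 then
        extC n3 f (↑(p + 1) - ↑q) + extC n3 f (↑(p + 1) + ↑q + 1) else 0) +
      (if _h : 1 ≤ p then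
        extC n3 f (↑(p - 1) - ↑q) + extC n3 f (↑(p - 1) + ↑q + 1) else 0)) +
      (if p = 0 ∨ p + 1 = n3 then
        extC n3 f ((p : ℤ) - ↑q) + extC n3 f ((p : ℤ) + ↑q + 1) else 0) =
    extC n3 f ((p : ℤ) - ↑q - 1) + extC n3 f ((p : ℤ) + ↑q) +
      extC n3 f ((p : ℤ) - ↑q + 1) + extC n3 f ((p : ℤ) + ↑q + 2) := by
  rcases Nat.eq_zero_or_pos p with hp0 | hp0
  · subst hp0
    rw [dif_pos (by omega), dif_neg (by omega), if_pos (Or.inl rfl)]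
    have t1 : extC n3 f (((0 + 1 : ℕ) : ℤ) - ↑q) = extC n3 f (((0:ℕ) : ℤ) - ↑q + 1) :=
      extC_arg f (by push_cast; ring)
    have t2 : extC n3 f (((0 + 1 : ℕ) : ℤ) + ↑q + 1) = extC n3 f (((0:ℕ) : ℤ) + ↑q + 2) :=
      extC_arg f (by push_cast; ring)
    have t4 : extC n3 f (((0:ℕ) : ℤ) - ↑q) = extC n3 f (((0:ℕ) : ℤ) + ↑q) := by
      rw [show ((0:ℕ) : ℤ) - ↑q = -(((0:ℕ) : ℤ) + ↑q) by push_cast; ring, extC_neg]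
    have t5 : extC n3 f (((0:ℕ) : ℤ) - ↑q - 1) = extC n3 f (((0:ℕ) : ℤ) + ↑q + 1) := by
      rw [show ((0:ℕ) : ℤ) - ↑q - 1 = -(((0:ℕ) : ℤ) + ↑q + 1) by push_cast; ring, extC_neg]
    rw [t1, t2, t4, t5]
    ring
  · rcases Nat.lt_or_ge (p + 1) n3 with hp1 | hp1
    · rw [dif_pos hp1, dif_pos (show 1 ≤ p by omega), if_neg (by omega)]
      rw [extC_arg f (show ((p + 1 : ℕ) : ℤ) - ↑q = (p : ℤ) - ↑q + 1 by push_cast; ring),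
          extC_arg f (show ((p + 1 : ℕ) : ℤ) + ↑q + 1 = (p : ℤ) + ↑q + 2 by push_cast; ring),
          extC_arg f (show ((p - 1 : ℕ) : ℤ) - ↑q = (p : ℤ) - ↑q - 1 by omega),
          extC_arg f (show ((p - 1 : ℕ) : ℤ) + ↑q + 1 = (p : ℤ) + ↑q by omega)]
      ring
    · have hc : p + 1 = n3 := by omega
      rw [dif_neg (by omega), dif_pos (show 1 ≤ p by omega), if_pos (Or.inr hc)]
      rw [extC_arg f (show ((p - 1 : ℕ) : ℤ) - ↑q = (p : ℤ) - ↑q - 1 by omega),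
          extC_arg f (show ((p - 1 : ℕ) : ℤ) + ↑q + 1 = (p : ℤ) + ↑q by omega)]
      have t5 : extC n3 f ((p : ℤ) + ↑q + 1) = extC n3 f ((p : ℤ) - ↑q + 1) := by
        rw [extC_arg f (show (p : ℤ) + ↑q + 1 = (n3 : ℤ) + (q : ℕ) by omega),
            extC_refl f q (by omega),
            extC_arg f (show (n3 : ℤ) - (q : ℕ) = (p : ℤ) - ↑q + 1 by omega)]
      have t6 : extC n3 f ((p : ℤ) + ↑q + 2) = extC n3 f ((p : ℤ) - ↑q) := by
        rw [extC_arg f (show (p : ℤ) + ↑q + 2 = (n3 : ℤ) + ((q + 1 : ℕ) : ℤ) by omega),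
            extC_refl f (q + 1) (by omega),
            extC_arg f (show (n3 : ℤ) - ((q + 1 : ℕ) : ℤ) = (p : ℤ) - ↑q by omega)]
      rw [t5, t6]
      ring

lemma sideR (f : ℕ → ℂ) (hn : 2 ≤ n3) (p q : ℕ) (hp : p < n3) (hq : q < n3) :
    ((if _h : q + 1 < n3 then
        extC n3 f ((p : ℤ) - ↑(q + 1)) + extC n3 f ((p : ℤ) + ↑(q + 1) + 1) else 0) +
      (if _h : 1 ≤ q then
        extC n3 f ((p : ℤ) - ↑(q - 1)) + extC n3 f ((p : ℤ) + ↑(q - 1) + 1) else 0)) +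
      (if q = 0 ∨ q + 1 = n3 then
        extC n3 f ((p : ℤ) - ↑q) + extC n3 f ((p : ℤ) + ↑q + 1) else 0) =
    extC n3 f ((p : ℤ) - ↑q - 1) + extC n3 f ((p : ℤ) + ↑q) +
      extC n3 f ((p : ℤ) - ↑q + 1) + extC n3 f ((p : ℤ) + ↑q + 2) := by
  rcases Nat.eq_zero_or_pos q with hq0 | hq0
  · subst hq0
    rw [dif_pos (by omega), dif_neg (by omega), if_pos (Or.inl rfl)]
    rw [extC_arg f (show (p : ℤ) - ((0 + 1 : ℕ) : ℤ) = (p : ℤ) - ((0:ℕ) : ℤ) - 1 by push_cast; ring),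
        extC_arg f (show (p : ℤ) + ((0 + 1 : ℕ) : ℤ) + 1 = (p : ℤ) + ((0:ℕ) : ℤ) + 2 by push_cast; ring)]
    have t4 : extC n3 f ((p : ℤ) - ((0:ℕ) : ℤ)) = extC n3 f ((p : ℤ) + ((0:ℕ) : ℤ)) :=
      extC_arg f (by push_cast; ring)
    have t5 : extC n3 f ((p : ℤ) + ((0:ℕ) : ℤ) + 1) = extC n3 f ((p : ℤ) - ((0:ℕ) : ℤ) + 1) :=
      extC_arg f (by push_cast; ring)
    rw [t4, t5]
    ring
  · rcases Nat.lt_or_ge (q + 1) n3 with hq1 | hq1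
    · rw [dif_pos hq1, dif_pos (show 1 ≤ q by omega), if_neg (by omega)]
      rw [extC_arg f (show (p : ℤ) - ((q + 1 : ℕ) : ℤ) = (p : ℤ) - ↑q - 1 by push_cast; ring),
          extC_arg f (show (p : ℤ) + ((q + 1 : ℕ) : ℤ) + 1 = (p : ℤ) + ↑q + 2 by push_cast; ring),
          extC_arg f (show (p : ℤ) - ((q - 1 : ℕ) : ℤ) = (p : ℤ) - ↑q + 1 by omega),
          extC_arg f (show (p : ℤ) + ((q - 1 : ℕ) : ℤ) + 1 = (p : ℤ) + ↑q by omega)]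
      ring
    · have hc : q + 1 = n3 := by omega
      rw [dif_neg (by omega), dif_pos (show 1 ≤ q by omega), if_pos (Or.inr hc)]
      rw [extC_arg f (show (p : ℤ) - ((q - 1 : ℕ) : ℤ) = (p : ℤ) - ↑q + 1 by omega),
          extC_arg f (show (p : ℤ) + ((q - 1 : ℕ) : ℤ) + 1 = (p : ℤ) + ↑q by omega)]
      have t5 : extC n3 f ((p : ℤ) + ↑q + 1) = extC n3 f ((p : ℤ) - ↑q - 1) := by
        rw [extC_arg f (show (p : ℤ) + ↑q + 1 = (n3 : ℤ) + (p : ℕ) by omega),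
            extC_refl f p (by omega),
            extC_arg f (show (n3 : ℤ) - (p : ℕ) = -((p : ℤ) - ↑q - 1) by omega),
            extC_neg]
      have t6 : extC n3 f ((p : ℤ) + ↑q + 2) = extC n3 f ((p : ℤ) - ↑q) := by
        rw [extC_arg f (show (p : ℤ) + ↑q + 2 = (n3 : ℤ) + ((p + 1 : ℕ) : ℤ) by omega),
            extC_refl f (p + 1) (by omega),
            extC_arg f (show (n3 : ℤ) - ((p + 1 : ℕ) : ℤ) = -((p : ℤ) - ↑q) by omega),
            extC_neg]
      rw [t5, ← t6]
      ring

lemma Cst_comm {n1 n2 : ℕ} (A : Tensor n1 n2 n3) :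
    Cst n3 n1 * matT A = matT A * Cst n3 n2 := by
  ext ⟨p, a⟩ ⟨q, b⟩
  rw [Cst_mul_apply, mul_Cst_apply, stencil_eval, stencil_eval]
  simp only [matT_apply_ext]
  rcases Nat.lt_or_ge n3 2 with hn | hn
  · have h1 : n3 = 1 := by have := p.2; omega
    have hpq : p = q := Fin.ext (by omega)
    rw [dif_neg (by omega), dif_neg (by omega), dif_neg (by omega), dif_neg (by omega),
        if_pos (by omega : p.1 = 0 ∨ p.1 + 1 = n3), if_pos (by omega : q.1 = 0 ∨ q.1 + 1 = n3),
        hpq]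
  · rw [sideL (sliceF A a b) hn p.1 q.1 p.2 q.2, sideR (sliceF A a b) hn p.1 q.1 p.2 q.2]

/-- Alternating partial sums. -/
def altS (u : Fin n3 → ℂ) (j : ℕ) : ℂ :=
  ∑ t : Fin n3, if j ≤ t.1 then (-1 : ℂ) ^ (t.1 - j) * u t else 0

lemma altS_rec (u : Fin n3 → ℂ) (j : ℕ) (hj : j < n3) :
    altS u j = u ⟨j, hj⟩ - altS u (j + 1) := by
  unfold altS
  rw [show (∑ t : Fin n3, if j ≤ t.1 then (-1 : ℂ) ^ (t.1 - j) * u t else 0)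
      = ∑ t : Fin n3, ((if t.1 = j then u t else 0) +
          (-(if j + 1 ≤ t.1 then (-1 : ℂ) ^ (t.1 - (j + 1)) * u t else 0))) by
    apply Finset.sum_congr rfl
    intro t _
    rcases Nat.lt_trichotomy t.1 j with h | h | h
    · rw [if_neg (by omega), if_neg (by omega), if_neg (by omega)]; ring
    · rw [if_pos (by omega), if_pos h, if_neg (by omega)]
      rw [show t.1 - j = 0 by omega]
      ring
    · rw [if_pos (by omega), if_neg (by omega), if_pos (by omega)]
      rw [show t.1 - j = (t.1 - (j + 1)) + 1 by omega, pow_succ]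
      ring]
  rw [Finset.sum_add_distrib, sum_ind, dif_pos hj]
  rw [Finset.sum_neg_distrib]
  ring

lemma altS_add (u : Fin n3 → ℂ) (j : ℕ) (hj : j < n3) :
    altS u j + altS u (j + 1) = u ⟨j, hj⟩ := by
  rw [altS_rec u j hj]; ring

lemma altS_of_ge (u : Fin n3 → ℂ) (j : ℕ) (hj : n3 ≤ j) : altS u j = 0 := by
  apply Finset.sum_eq_zero
  intro t _
  rw [if_neg (by omega : ¬ j ≤ t.1)]

lemma matT_first_col {n1 n2 : ℕ} (A : Tensor n1 n2 n3) (t : Fin n3) (a : Fin n1)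
    (h0 : 0 < n3) (b : Fin n2) :
    matT A (t, a) (⟨0, h0⟩, b) =
      A t a b + (if h : t.1 + 1 < n3 then A ⟨t.1 + 1, h⟩ a b else 0) := by
  unfold matT
  dsimp only
  congr 1
  · congr 1
    exact Fin.ext (show t.1 - 0 + (0 - t.1) = t.1 by omega)
  · rcases Nat.lt_or_ge (t.1 + 1) n3 with h | h
    · rw [dif_pos (by omega : t.1 + 0 + 2 ≤ n3), dif_pos h]
    · rw [dif_neg (by omega), dif_neg (by omega : ¬ n3 ≤ t.1 + 0), dif_neg (by omega)]

lemma ten_mat {n1 n2 : ℕ} (A : Tensor n1 n2 n3) : tenT (matT A) = A := by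
  funext i
  ext a b
  have h0 : 0 < n3 := i.pos
  show (∑ t : Fin n3, if i.1 ≤ t.1 then
      (-1 : ℂ) ^ (t.1 - i.1) * matT A (t, a) (⟨0, i.pos⟩, b) else 0) = A i a b
  set w : ℕ → ℂ := fun s => if h : s < n3 then
      (if i.1 + 1 ≤ s then (-1 : ℂ) ^ (s - (i.1 + 1)) * A ⟨s, h⟩ a b else 0) else 0 with hw
  have hterm : ∀ t : Fin n3,
      (if i.1 ≤ t.1 then (-1 : ℂ) ^ (t.1 - i.1) * matT A (t, a) (⟨0, i.pos⟩, b) else 0)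
      = (if i.1 ≤ t.1 then (-1 : ℂ) ^ (t.1 - i.1) * A t a b else 0) + w (t.1 + 1) := by
    intro t
    rw [matT_first_col A t a i.pos b]
    rcases Nat.lt_or_ge t.1 i.1 with h | h
    · rw [if_neg (by omega), if_neg (by omega), hw]
      rcases Nat.lt_or_ge (t.1 + 1) n3 with h2 | h2
      · simp only [dif_pos h2]
        rw [if_neg (by omega)]
        ring
      · simp only [dif_neg (by omega : ¬ t.1 + 1 < n3)]
        ring
    · rw [if_pos (by omega), if_pos (by omega), hw]
      rcases Nat.lt_or_ge (t.1 + 1) n3 with h2 | h2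
      · simp only [dif_pos h2]
        rw [if_pos (by omega), show t.1 + 1 - (i.1 + 1) = t.1 - i.1 by omega]
        ring
      · simp only [dif_neg (by omega : ¬ t.1 + 1 < n3)]
        ring
  rw [Finset.sum_congr rfl (fun t _ => hterm t), Finset.sum_add_distrib]
  have h1 : ∑ t : Fin n3, w (t.1 + 1) = ∑ t ∈ Finset.range n3, w (t + 1) :=
    Fin.sum_univ_eq_sum_range (fun t => w (t + 1)) n3
  have h2 : altS (fun t => A t a b) (i.1 + 1) = ∑ t ∈ Finset.range n3, w t := by
    unfold altS
    rw [show (∑ t : Fin n3, if i.1 + 1 ≤ t.1 then (-1 : ℂ) ^ (t.1 - (i.1 + 1)) * A t a b else 0)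
        = ∑ t : Fin n3, w t.1 by
      apply Finset.sum_congr rfl
      intro t _
      simp only [hw]
      simp only [dif_pos t.2, Fin.eta]]
    exact Fin.sum_univ_eq_sum_range w n3
  have h3 : ∑ t ∈ Finset.range (n3 + 1), w t
      = (∑ t ∈ Finset.range n3, w (t + 1)) + w 0 := Finset.sum_range_succ' w n3
  have h4 : ∑ t ∈ Finset.range (n3 + 1), w t
      = (∑ t ∈ Finset.range n3, w t) + w n3 := Finset.sum_range_succ w n3
  have hw0 : w 0 = 0 := by
    simp only [hw]
    rcases Nat.lt_or_ge 0 n3 with h | h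
    · rw [dif_pos h, if_neg (by omega)]
    · rw [dif_neg (by omega)]
  have hwn : w n3 = 0 := by simp only [hw]; rw [dif_neg (by omega)]
  have h5 : ∑ t : Fin n3, w (t.1 + 1) = altS (fun t => A t a b) (i.1 + 1) := by
    rw [h1, h2]
    rw [hw0] at h3
    rw [hwn] at h4
    rw [add_zero] at h3 h4
    rw [← h3, h4]
  rw [h5]
  have h6 : (∑ t : Fin n3, if i.1 ≤ t.1 then (-1 : ℂ) ^ (t.1 - i.1) * A t a b else 0)
      = altS (fun t => A t a b) i.1 := rfl
  rw [h6, altS_add (fun t => A t a b) i.1 i.2, Fin.eta]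

lemma firstcol {n1 n2 : ℕ} (M : Matrix (Fin n3 × Fin n1) (Fin n3 × Fin n2) ℂ)
    (p : Fin n3) (a : Fin n1) (h0 : 0 < n3) (b : Fin n2) :
    matT (tenT M) (p, a) (⟨0, h0⟩, b) = M (p, a) (⟨0, h0⟩, b) := by
  rw [matT_first_col _ p a h0 b]
  have hx : ∀ (t : Fin n3), tenT M t a b = altS (fun t => M (t, a) (⟨0, h0⟩, b)) t.1 :=
    fun t => rfl
  rw [hx p]
  have h2 : (if h : p.1 + 1 < n3 then tenT M ⟨p.1 + 1, h⟩ a b else 0)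
      = altS (fun t => M (t, a) (⟨0, h0⟩, b)) (p.1 + 1) := by
    split_ifs with h
    · exact hx ⟨p.1 + 1, h⟩
    · rw [altS_of_ge _ _ (by omega)]
  rw [h2, altS_add _ p.1 p.2]

lemma uniq_comm {n1 n2 : ℕ} (M N : Matrix (Fin n3 × Fin n1) (Fin n3 × Fin n2) ℂ)
    (hM : Cst n3 n1 * M = M * Cst n3 n2) (hN : Cst n3 n1 * N = N * Cst n3 n2)
    (hcol : ∀ (p : Fin n3) (a : Fin n1) (h0 : 0 < n3) (b : Fin n2),
      M (p, a) (⟨0, h0⟩, b) = N (p, a) (⟨0, h0⟩, b)) : M = N := by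
  have key : ∀ (J : ℕ) (q : Fin n3), q.1 ≤ J →
      ∀ (p : Fin n3) (a : Fin n1) (b : Fin n2), M (p, a) (q, b) = N (p, a) (q, b) := by
    intro J
    induction J with
    | zero =>
      intro q hq p a b
      have h0 : 0 < n3 := q.pos
      rw [show q = ⟨0, h0⟩ from Fin.ext (show q.1 = 0 by omega)]
      exact hcol p a h0 b
    | succ J ih =>
      intro q hq p a b
      rcases Nat.lt_or_ge q.1 (J + 1) with hle | hgt
      · exact ih q (by omega) p a b
      have hq1 : q.1 = J + 1 := by omega
      have hJ : J < n3 := by have := q.2; omega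
      have hJ1 : J + 1 < n3 := by have := q.2; omega
      have eqM : (Cst n3 n1 * M) (p, a) ((⟨J, hJ⟩ : Fin n3), b)
          = (M * Cst n3 n2) (p, a) ((⟨J, hJ⟩ : Fin n3), b) := by rw [hM]
      have eqN : (Cst n3 n1 * N) (p, a) ((⟨J, hJ⟩ : Fin n3), b)
          = (N * Cst n3 n2) (p, a) ((⟨J, hJ⟩ : Fin n3), b) := by rw [hN]
      rw [mul_Cst_apply, stencil_eval] at eqM eqN
      rw [Cst_mul_apply] at eqM eqN
      rw [dif_pos (show (⟨J, hJ⟩ : Fin n3).1 + 1 < n3 from hJ1)] at eqM eqN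
      have h1 : (∑ t : Fin n3, wst n3 p.1 t.1 * M (t, a) ((⟨J, hJ⟩ : Fin n3), b))
          = ∑ t : Fin n3, wst n3 p.1 t.1 * N (t, a) ((⟨J, hJ⟩ : Fin n3), b) :=
        Finset.sum_congr rfl (fun t _ => by rw [ih ⟨J, hJ⟩ (show J ≤ J from le_rfl) t a b])
      rw [show q = (⟨(⟨J, hJ⟩ : Fin n3).1 + 1, hJ1⟩ : Fin n3) from Fin.ext (show q.1 = J + 1 by omega)]
      by_cases hb1 : 1 ≤ (⟨J, hJ⟩ : Fin n3).1
      · rw [dif_pos hb1] at eqM eqN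
        have h2 := ih ⟨(⟨J, hJ⟩ : Fin n3).1 - 1,
          lt_of_le_of_lt (Nat.sub_le _ _) (⟨J, hJ⟩ : Fin n3).2⟩ (show J - 1 ≤ J by omega) p a b
        by_cases hb2 : (⟨J, hJ⟩ : Fin n3).1 = 0 ∨ (⟨J, hJ⟩ : Fin n3).1 + 1 = n3
        · rw [if_pos hb2] at eqM eqN
          have h3 := ih ⟨J, hJ⟩ (show J ≤ J from le_rfl) p a b
          linear_combination h1 - h2 - h3 - eqM + eqN
        · rw [if_neg hb2] at eqM eqN
          linear_combination h1 - h2 - eqM + eqN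
      · rw [dif_neg hb1] at eqM eqN
        by_cases hb2 : (⟨J, hJ⟩ : Fin n3).1 = 0 ∨ (⟨J, hJ⟩ : Fin n3).1 + 1 = n3
        · rw [if_pos hb2] at eqM eqN
          have h3 := ih ⟨J, hJ⟩ (show J ≤ J from le_rfl) p a b
          linear_combination h1 - h3 - eqM + eqN
        · rw [if_neg hb2] at eqM eqN
          linear_combination h1 - eqM + eqN
  ext ⟨p, a⟩ ⟨q, b⟩
  exact key q.1 q le_rfl p a b

lemma recon {n1 n2 : ℕ} (M : Matrix (Fin n3 × Fin n1) (Fin n3 × Fin n2) ℂ)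
    (hM : Cst n3 n1 * M = M * Cst n3 n2) : matT (tenT M) = M :=
  uniq_comm _ _ (Cst_comm (tenT M)) hM (fun p a h0 b => firstcol M p a h0 b)

lemma matT_cmul {n1 n2 l : ℕ} (A : Tensor n1 n2 n3) (B : Tensor n2 l n3) :
    matT (cmul A B) = matT A * matT B := by
  apply recon
  rw [← Matrix.mul_assoc, Cst_comm A, Matrix.mul_assoc, Cst_comm B, ← Matrix.mul_assoc]

lemma matT_inj {n1 n2 : ℕ} {A B : Tensor n1 n2 n3} (h : matT A = matT B) : A = B := by
  rw [← ten_mat A, ← ten_mat B, h]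

lemma matT_idT {n : ℕ} : matT (idT : Tensor n n n3) = 1 := by
  have key : ∀ (i : Fin n3) (a b : Fin n), (idT (n := n) i) a b
      = if i.1 = 0 ∧ a = b then 1 else 0 := by
    intro i a b
    unfold idT
    by_cases h1 : i.1 = 0
    · rw [if_pos h1, Matrix.one_apply]
      by_cases hab : a = b
      · rw [if_pos hab, if_pos ⟨h1, hab⟩]
      · rw [if_neg hab, if_neg (fun hc => hab hc.2)]
    · rw [if_neg h1, if_neg (fun hc => h1 hc.1), Matrix.zero_apply]
  ext ⟨p, a⟩ ⟨q, b⟩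
  unfold matT
  dsimp only
  simp only [key, Fin.val_mk]
  rw [Matrix.one_apply]
  simp only [Prod.mk.injEq, Fin.ext_iff]
  have hp := p.2
  have hq := q.2
  by_cases hab : a = b
  · subst hab
    split_ifs <;> first | omega | contradiction | tauto | norm_num
  · have hab2 : (a : ℕ) ≠ (b : ℕ) := fun h => hab (Fin.ext h)
    split_ifs <;> first | omega | contradiction | tauto | norm_num

lemma matT_cpow {n : ℕ} (A : Tensor n n n3) (m : ℕ) : matT (cpow A m) = matT A ^ m := by
  induction m with
  | zero => rw [pow_zero]; exact matT_idT
  | succ m ih => rw [show cpow A (m + 1) = cmul (cpow A m) A from rfl, matT_cmul, ih, pow_succ]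

lemma exists_inv_tensor {n : ℕ} (B : Tensor n n n3) (N : Matrix (Fin n3 × Fin n) (Fin n3 × Fin n) ℂ)
    (h1 : matT B * N = 1) (h2 : N * matT B = 1) :
    ∃ W : Tensor n n n3, IsInverse B W ∧ matT W = N := by
  have hcomm : Cst n3 n * N = N * Cst n3 n := by
    calc Cst n3 n * N = 1 * (Cst n3 n * N) := by rw [one_mul]
    _ = (N * matT B) * (Cst n3 n * N) := by rw [h2]
    _ = N * ((matT B * Cst n3 n) * N) := by noncomm_ring
    _ = N * ((Cst n3 n * matT B) * N) := by rw [← Cst_comm B]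
    _ = (N * Cst n3 n) * (matT B * N) := by noncomm_ring
    _ = N * Cst n3 n := by rw [h1, mul_one]
  refine ⟨tenT N, ⟨?_, ?_⟩, recon N hcomm⟩
  · apply matT_inj
    rw [matT_cmul, recon N hcomm, h1, matT_idT]
  · apply matT_inj
    rw [matT_cmul, recon N hcomm, h2, matT_idT]

lemma rank_step {m : Type} [Fintype m] [DecidableEq m] (M : Matrix m m ℂ) (k : ℕ)
    (h : (M ^ k).rank = (M ^ (k + 1)).rank) :
    ∃ C : Matrix m m ℂ, M ^ k = M ^ (k + 1) * C := by
  have hle : LinearMap.range (M ^ (k + 1)).mulVecLin ≤ LinearMap.range (M ^ k).mulVecLin := by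
    rw [pow_succ, Matrix.mulVecLin_mul]
    exact LinearMap.range_comp_le_range _ _
  have heq : LinearMap.range (M ^ (k + 1)).mulVecLin = LinearMap.range (M ^ k).mulVecLin :=
    Submodule.eq_of_le_of_finrank_le hle (by simpa [Matrix.rank] using h.le)
  have hcol : ∀ j, ∃ v, (M ^ (k + 1)).mulVecLin v = (M ^ k).mulVec (Pi.single j 1) := by
    intro j
    have hmem : (M ^ k).mulVec (Pi.single j 1) ∈ LinearMap.range (M ^ k).mulVecLin :=
      ⟨Pi.single j 1, rfl⟩
    rw [← heq] at hmem
    exact hmem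
  choose c hc using hcol
  refine ⟨Matrix.of fun i j => c j i, ?_⟩
  ext i j
  rw [Matrix.mul_apply]
  have h1 : (∑ t, (M ^ (k + 1)) i t * (Matrix.of fun i j => c j i) t j)
      = ((M ^ (k + 1)).mulVecLin (c j)) i := rfl
  rw [h1, hc j]
  rw [Matrix.mulVec_single]
  simp


set_option maxHeartbeats 2000000 in
theorem stmt13' {n r n3 : ℕ} (A : Tensor n n n3) (k : ℕ)
    (hk : IsIndex A k) (hk1 : 1 ≤ k)
    (Q : Tensor n r n3) (D : Tensor r r n3) (R : Tensor r n n3)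
    (hdec : cpow A k = cmul (cmul Q D) R)
    (hD : FDiag D) (hDinv : ∃ W, IsInverse D W)
    (hQ : ∃ W, IsInverse (cmul (conjT Q) Q) W)
    (hR : ∃ W, IsInverse (cmul R (conjT R)) W) :
    ∃ W, IsInverse (cmul (cmul R A) Q) W ∧
      IsDrazin A k (cmul (cmul Q W) R) := by
  classical
  obtain ⟨Dw, hDw⟩ := hDinv
  obtain ⟨Uq, hUq⟩ := hQ
  obtain ⟨Vr, hVr⟩ := hR
  have hD1 : matT D * matT Dw = 1 := by
    have := congrArg matT hDw.1; rwa [matT_cmul, matT_idT] at this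
  have hD2 : matT Dw * matT D = 1 := by
    have := congrArg matT hDw.2; rwa [matT_cmul, matT_idT] at this
  have hU1 : (matT (conjT Q) * matT Q) * matT Uq = 1 := by
    have := congrArg matT hUq.1; rwa [matT_cmul, matT_cmul, matT_idT] at this
  have hU2 : matT Uq * (matT (conjT Q) * matT Q) = 1 := by
    have := congrArg matT hUq.2; rwa [matT_cmul, matT_cmul, matT_idT] at this
  have hV1 : (matT R * matT (conjT R)) * matT Vr = 1 := by
    have := congrArg matT hVr.1; rwa [matT_cmul, matT_cmul, matT_idT] at this
  have hV2 : matT Vr * (matT R * matT (conjT R)) = 1 := by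
    have := congrArg matT hVr.2; rwa [matT_cmul, matT_cmul, matT_idT] at this
  have hdecM : matT A ^ k = matT Q * (matT D * matT R) := by
    have := congrArg matT hdec
    rwa [matT_cpow, matT_cmul, matT_cmul, Matrix.mul_assoc] at this
  obtain ⟨C, hC⟩ := rank_step (matT A) k hk.1
  have sV : ∀ {α : Type} (X : Matrix (Fin n3 × Fin r) α ℂ),
      matT R * (matT (conjT R) * (matT Vr * X)) = X := by
    intro α X
    calc matT R * (matT (conjT R) * (matT Vr * X)) = ((matT R * matT (conjT R)) * matT Vr) * X := by
          simp only [Matrix.mul_assoc]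
    _ = X := by rw [hV1, Matrix.one_mul]
  have sU : ∀ {α : Type} (X : Matrix (Fin n3 × Fin r) α ℂ),
      matT Uq * (matT (conjT Q) * (matT Q * X)) = X := by
    intro α X
    calc matT Uq * (matT (conjT Q) * (matT Q * X)) = (matT Uq * (matT (conjT Q) * matT Q)) * X := by
          simp only [Matrix.mul_assoc]
    _ = X := by rw [hU2, Matrix.one_mul]
  have sD' : ∀ {α : Type} (X : Matrix (Fin n3 × Fin r) α ℂ),
      matT Dw * (matT D * X) = X := by
    intro α X
    calc matT Dw * (matT D * X) = (matT Dw * matT D) * X := by simp only [Matrix.mul_assoc]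
    _ = X := by rw [hD2, Matrix.one_mul]
  have hQfac : matT A ^ k * (matT (conjT R) * (matT Vr * matT Dw)) = matT Q := by
    calc matT A ^ k * (matT (conjT R) * (matT Vr * matT Dw)) = matT Q * (matT D * (matT R * (matT (conjT R) * (matT Vr * matT Dw)))) := by
          rw [hdecM]; simp only [Matrix.mul_assoc]
    _ = matT Q * (matT D * matT Dw) := by rw [sV]
    _ = matT Q := by rw [hD1, Matrix.mul_one]
  have hRfac : (matT Dw * (matT Uq * matT (conjT Q))) * matT A ^ k = matT R := by
    calc (matT Dw * (matT Uq * matT (conjT Q))) * matT A ^ k = matT Dw * (matT Uq * (matT (conjT Q) * (matT Q * (matT D * matT R)))) := by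
          rw [hdecM]; simp only [Matrix.mul_assoc]
    _ = matT Dw * (matT D * matT R) := by rw [sU]
    _ = matT R := sD' _
  have sRfac : ∀ {α : Type} (X : Matrix (Fin n3 × Fin n) α ℂ),
      (matT Dw * (matT Uq * matT (conjT Q))) * (matT A ^ k * X) = matT R * X := by
    intro α X
    rw [← Matrix.mul_assoc, hRfac]
  have sdec : ∀ {α : Type} (X : Matrix (Fin n3 × Fin n) α ℂ),
      matT Q * (matT D * (matT R * X)) = matT A ^ k * X := by
    intro α X
    rw [hdecM]; simp only [Matrix.mul_assoc]
  have hiter : ∀ m, matT A ^ k = matT A ^ (k + m) * C ^ m := by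
    intro m
    induction m with
    | zero => simp
    | succ m ih =>
      have h1 : matT A ^ (k + (m + 1)) = matT A ^ m * matT A ^ (k + 1) := by
        rw [← pow_add, show m + (k + 1) = k + (m + 1) by omega]
      calc matT A ^ k = matT A ^ (k + m) * C ^ m := ih
      _ = (matT A ^ m * matT A ^ k) * C ^ m := by
          rw [← pow_add, show m + k = k + m by omega]
      _ = (matT A ^ m * (matT A ^ (k + 1) * C)) * C ^ m := by rw [← hC]
      _ = matT A ^ (k + (m + 1)) * C ^ (m + 1) := by
          rw [h1, pow_succ' C m]; simp only [Matrix.mul_assoc]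
  have hMk : matT A ^ k = matT A ^ (k + (k + 1)) * C ^ (k + 1) := hiter (k + 1)
  have key5 : matT R * (matT A * (matT Q * (matT D * (matT R * (C ^ (k + 1) * (matT (conjT R) * (matT Vr * matT Dw))))))) = matT Dw := by
    have e1 : (matT Dw * (matT Uq * matT (conjT Q))) * (matT A ^ k * (matT (conjT R) * (matT Vr * matT Dw))) = matT Dw := by
      rw [hQfac]
      calc (matT Dw * (matT Uq * matT (conjT Q))) * matT Q = matT Dw * (matT Uq * (matT (conjT Q) * matT Q)) := by simp only [Matrix.mul_assoc]
      _ = matT Dw := by rw [hU2, Matrix.mul_one]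
    have e4 : matT A ^ k * ((matT A * matT A ^ k) * (C ^ (k + 1) * (matT (conjT R) * (matT Vr * matT Dw)))) = matT A ^ k * (matT (conjT R) * (matT Vr * matT Dw)) := by
      calc matT A ^ k * ((matT A * matT A ^ k) * (C ^ (k + 1) * (matT (conjT R) * (matT Vr * matT Dw))))
          = (matT A ^ (k + (k + 1)) * C ^ (k + 1)) * (matT (conjT R) * (matT Vr * matT Dw)) := by
            conv_rhs => rw [pow_add, pow_succ']
            simp only [Matrix.mul_assoc]
      _ = matT A ^ k * (matT (conjT R) * (matT Vr * matT Dw)) := by rw [← hMk]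
    calc matT R * (matT A * (matT Q * (matT D * (matT R * (C ^ (k + 1) * (matT (conjT R) * (matT Vr * matT Dw)))))))
        = matT R * (matT A * (matT A ^ k * (C ^ (k + 1) * (matT (conjT R) * (matT Vr * matT Dw))))) := by rw [sdec]
    _ = matT R * ((matT A * matT A ^ k) * (C ^ (k + 1) * (matT (conjT R) * (matT Vr * matT Dw)))) := by simp only [Matrix.mul_assoc]
    _ = (matT Dw * (matT Uq * matT (conjT Q))) * (matT A ^ k * ((matT A * matT A ^ k) * (C ^ (k + 1) * (matT (conjT R) * (matT Vr * matT Dw))))) := (sRfac _).symm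
    _ = (matT Dw * (matT Uq * matT (conjT Q))) * (matT A ^ k * (matT (conjT R) * (matT Vr * matT Dw))) := by rw [e4]
    _ = matT Dw := e1
  have hSY : (matT R * (matT A * matT Q)) * (matT D * (matT R * (C ^ (k + 1) * ((matT (conjT R) * (matT Vr * matT Dw)) * matT D)))) = 1 := by
    calc (matT R * (matT A * matT Q)) * (matT D * (matT R * (C ^ (k + 1) * ((matT (conjT R) * (matT Vr * matT Dw)) * matT D))))
        = (matT R * (matT A * (matT Q * (matT D * (matT R * (C ^ (k + 1) * (matT (conjT R) * (matT Vr * matT Dw)))))))) * matT D := by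
          simp only [Matrix.mul_assoc]
    _ = matT Dw * matT D := by rw [key5]
    _ = 1 := hD2
  have hYS : (matT D * (matT R * (C ^ (k + 1) * ((matT (conjT R) * (matT Vr * matT Dw)) * matT D)))) * (matT R * (matT A * matT Q)) = 1 := mul_eq_one_comm.mp hSY
  have hSm : matT (cmul (cmul R A) Q) = matT R * (matT A * matT Q) := by
    rw [matT_cmul, matT_cmul, Matrix.mul_assoc]
  obtain ⟨W, hWinv, hWm⟩ := exists_inv_tensor (cmul (cmul R A) Q) (matT D * (matT R * (C ^ (k + 1) * ((matT (conjT R) * (matT Vr * matT Dw)) * matT D))))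
    (by rw [hSm]; exact hSY) (by rw [hSm]; exact hYS)
  have hMQ : matT A * matT Q = matT Q * (matT D * (matT R * (matT A * (matT (conjT R) * (matT Vr * matT Dw))))) := by
    calc matT A * matT Q = matT A * (matT A ^ k * (matT (conjT R) * (matT Vr * matT Dw))) := by rw [hQfac]
    _ = (matT A ^ (k + 1)) * (matT (conjT R) * (matT Vr * matT Dw)) := by rw [pow_succ']; simp only [Matrix.mul_assoc]
    _ = matT A ^ k * (matT A * (matT (conjT R) * (matT Vr * matT Dw))) := by rw [pow_succ]; simp only [Matrix.mul_assoc]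
    _ = matT Q * (matT D * (matT R * (matT A * (matT (conjT R) * (matT Vr * matT Dw))))) := (sdec _).symm
  have hRM : matT R * matT A = ((matT Dw * (matT Uq * matT (conjT Q))) * (matT A * (matT Q * matT D))) * matT R := by
    calc matT R * matT A = ((matT Dw * (matT Uq * matT (conjT Q))) * matT A ^ k) * matT A := by rw [hRfac]
    _ = (matT Dw * (matT Uq * matT (conjT Q))) * (matT A ^ (k + 1)) := by
          simp only [Matrix.mul_assoc]; rw [← pow_succ]
    _ = (matT Dw * (matT Uq * matT (conjT Q))) * (matT A * (matT Q * (matT D * matT R))) := by rw [pow_succ', hdecM]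
    _ = ((matT Dw * (matT Uq * matT (conjT Q))) * (matT A * (matT Q * matT D))) * matT R := by simp only [Matrix.mul_assoc]
  have hGGi : (matT R * matT Q) * ((matT D * (matT R * (matT A * (matT (conjT R) * (matT Vr * matT Dw))))) * (matT D * (matT R * (C ^ (k + 1) * ((matT (conjT R) * (matT Vr * matT Dw)) * matT D))))) = 1 := by
    calc (matT R * matT Q) * ((matT D * (matT R * (matT A * (matT (conjT R) * (matT Vr * matT Dw))))) * (matT D * (matT R * (C ^ (k + 1) * ((matT (conjT R) * (matT Vr * matT Dw)) * matT D))))) = (matT R * (matT Q * (matT D * (matT R * (matT A * (matT (conjT R) * (matT Vr * matT Dw))))))) * (matT D * (matT R * (C ^ (k + 1) * ((matT (conjT R) * (matT Vr * matT Dw)) * matT D)))) := by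
          simp only [Matrix.mul_assoc]
    _ = (matT R * (matT A * matT Q)) * (matT D * (matT R * (C ^ (k + 1) * ((matT (conjT R) * (matT Vr * matT Dw)) * matT D)))) := by rw [← hMQ]
    _ = 1 := hSY
  have hGiG : ((matT D * (matT R * (matT A * (matT (conjT R) * (matT Vr * matT Dw))))) * (matT D * (matT R * (C ^ (k + 1) * ((matT (conjT R) * (matT Vr * matT Dw)) * matT D))))) * (matT R * matT Q) = 1 := mul_eq_one_comm.mp hGGi
  have hYT' : (matT D * (matT R * (C ^ (k + 1) * ((matT (conjT R) * (matT Vr * matT Dw)) * matT D)))) * ((matT Dw * (matT Uq * matT (conjT Q))) * (matT A * (matT Q * matT D))) = ((matT D * (matT R * (matT A * (matT (conjT R) * (matT Vr * matT Dw))))) * (matT D * (matT R * (C ^ (k + 1) * ((matT (conjT R) * (matT Vr * matT Dw)) * matT D))))) := by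
    have h1 : ((matT D * (matT R * (C ^ (k + 1) * ((matT (conjT R) * (matT Vr * matT Dw)) * matT D)))) * ((matT Dw * (matT Uq * matT (conjT Q))) * (matT A * (matT Q * matT D)))) * (matT R * matT Q) = 1 := by
      calc ((matT D * (matT R * (C ^ (k + 1) * ((matT (conjT R) * (matT Vr * matT Dw)) * matT D)))) * ((matT Dw * (matT Uq * matT (conjT Q))) * (matT A * (matT Q * matT D)))) * (matT R * matT Q) = (matT D * (matT R * (C ^ (k + 1) * ((matT (conjT R) * (matT Vr * matT Dw)) * matT D)))) * ((((matT Dw * (matT Uq * matT (conjT Q))) * (matT A * (matT Q * matT D))) * matT R) * matT Q) := by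
            simp only [Matrix.mul_assoc]
      _ = (matT D * (matT R * (C ^ (k + 1) * ((matT (conjT R) * (matT Vr * matT Dw)) * matT D)))) * ((matT R * matT A) * matT Q) := by rw [← hRM]
      _ = (matT D * (matT R * (C ^ (k + 1) * ((matT (conjT R) * (matT Vr * matT Dw)) * matT D)))) * (matT R * (matT A * matT Q)) := by simp only [Matrix.mul_assoc]
      _ = 1 := hYS
    calc (matT D * (matT R * (C ^ (k + 1) * ((matT (conjT R) * (matT Vr * matT Dw)) * matT D)))) * ((matT Dw * (matT Uq * matT (conjT Q))) * (matT A * (matT Q * matT D))) = ((matT D * (matT R * (C ^ (k + 1) * ((matT (conjT R) * (matT Vr * matT Dw)) * matT D)))) * ((matT Dw * (matT Uq * matT (conjT Q))) * (matT A * (matT Q * matT D)))) * ((matT R * matT Q) * ((matT D * (matT R * (matT A * (matT (conjT R) * (matT Vr * matT Dw))))) * (matT D * (matT R * (C ^ (k + 1) * ((matT (conjT R) * (matT Vr * matT Dw)) * matT D)))))) := by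
          rw [hGGi, Matrix.mul_one]
    _ = (((matT D * (matT R * (C ^ (k + 1) * ((matT (conjT R) * (matT Vr * matT Dw)) * matT D)))) * ((matT Dw * (matT Uq * matT (conjT Q))) * (matT A * (matT Q * matT D)))) * (matT R * matT Q)) * ((matT D * (matT R * (matT A * (matT (conjT R) * (matT Vr * matT Dw))))) * (matT D * (matT R * (C ^ (k + 1) * ((matT (conjT R) * (matT Vr * matT Dw)) * matT D))))) := by simp only [Matrix.mul_assoc]
    _ = ((matT D * (matT R * (matT A * (matT (conjT R) * (matT Vr * matT Dw))))) * (matT D * (matT R * (C ^ (k + 1) * ((matT (conjT R) * (matT Vr * matT Dw)) * matT D))))) := by rw [h1, Matrix.one_mul]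
  have hMX : matT A * (matT Q * ((matT D * (matT R * (C ^ (k + 1) * ((matT (conjT R) * (matT Vr * matT Dw)) * matT D)))) * matT R)) = matT Q * (((matT D * (matT R * (matT A * (matT (conjT R) * (matT Vr * matT Dw))))) * (matT D * (matT R * (C ^ (k + 1) * ((matT (conjT R) * (matT Vr * matT Dw)) * matT D))))) * matT R) := by
    calc matT A * (matT Q * ((matT D * (matT R * (C ^ (k + 1) * ((matT (conjT R) * (matT Vr * matT Dw)) * matT D)))) * matT R)) = (matT A * matT Q) * ((matT D * (matT R * (C ^ (k + 1) * ((matT (conjT R) * (matT Vr * matT Dw)) * matT D)))) * matT R) := by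
          simp only [Matrix.mul_assoc]
    _ = (matT Q * (matT D * (matT R * (matT A * (matT (conjT R) * (matT Vr * matT Dw)))))) * ((matT D * (matT R * (C ^ (k + 1) * ((matT (conjT R) * (matT Vr * matT Dw)) * matT D)))) * matT R) := by rw [hMQ]
    _ = matT Q * (((matT D * (matT R * (matT A * (matT (conjT R) * (matT Vr * matT Dw))))) * (matT D * (matT R * (C ^ (k + 1) * ((matT (conjT R) * (matT Vr * matT Dw)) * matT D))))) * matT R) := by simp only [Matrix.mul_assoc]
  have hXM : (matT Q * ((matT D * (matT R * (C ^ (k + 1) * ((matT (conjT R) * (matT Vr * matT Dw)) * matT D)))) * matT R)) * matT A = matT Q * (((matT D * (matT R * (matT A * (matT (conjT R) * (matT Vr * matT Dw))))) * (matT D * (matT R * (C ^ (k + 1) * ((matT (conjT R) * (matT Vr * matT Dw)) * matT D))))) * matT R) := by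
    calc (matT Q * ((matT D * (matT R * (C ^ (k + 1) * ((matT (conjT R) * (matT Vr * matT Dw)) * matT D)))) * matT R)) * matT A = matT Q * ((matT D * (matT R * (C ^ (k + 1) * ((matT (conjT R) * (matT Vr * matT Dw)) * matT D)))) * (matT R * matT A)) := by
          simp only [Matrix.mul_assoc]
    _ = matT Q * ((matT D * (matT R * (C ^ (k + 1) * ((matT (conjT R) * (matT Vr * matT Dw)) * matT D)))) * (((matT Dw * (matT Uq * matT (conjT Q))) * (matT A * (matT Q * matT D))) * matT R)) := by rw [hRM]
    _ = matT Q * (((matT D * (matT R * (C ^ (k + 1) * ((matT (conjT R) * (matT Vr * matT Dw)) * matT D)))) * ((matT Dw * (matT Uq * matT (conjT Q))) * (matT A * (matT Q * matT D)))) * matT R) := by simp only [Matrix.mul_assoc]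
    _ = matT Q * (((matT D * (matT R * (matT A * (matT (conjT R) * (matT Vr * matT Dw))))) * (matT D * (matT R * (C ^ (k + 1) * ((matT (conjT R) * (matT Vr * matT Dw)) * matT D))))) * matT R) := by rw [hYT']
  refine ⟨W, hWinv, ?_, ?_, ?_⟩
  · -- A^(k+1) * X = A^k
    apply matT_inj
    rw [matT_cmul, matT_cpow, matT_cmul, matT_cmul, hWm, matT_cpow]
    calc matT A ^ (k + 1) * ((matT Q * (matT D * (matT R * (C ^ (k + 1) * ((matT (conjT R) * (matT Vr * matT Dw)) * matT D))))) * matT R)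
        = matT A ^ k * (matT A * (matT Q * ((matT D * (matT R * (C ^ (k + 1) * ((matT (conjT R) * (matT Vr * matT Dw)) * matT D)))) * matT R))) := by
          rw [pow_succ]; simp only [Matrix.mul_assoc]
    _ = matT A ^ k * (matT Q * (((matT D * (matT R * (matT A * (matT (conjT R) * (matT Vr * matT Dw))))) * (matT D * (matT R * (C ^ (k + 1) * ((matT (conjT R) * (matT Vr * matT Dw)) * matT D))))) * matT R)) := by rw [hMX]
    _ = matT Q * (matT D * (matT R * (matT Q * (((matT D * (matT R * (matT A * (matT (conjT R) * (matT Vr * matT Dw))))) * (matT D * (matT R * (C ^ (k + 1) * ((matT (conjT R) * (matT Vr * matT Dw)) * matT D))))) * matT R)))) := by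
          rw [hdecM]; simp only [Matrix.mul_assoc]
    _ = matT Q * (matT D * (((matT R * matT Q) * ((matT D * (matT R * (matT A * (matT (conjT R) * (matT Vr * matT Dw))))) * (matT D * (matT R * (C ^ (k + 1) * ((matT (conjT R) * (matT Vr * matT Dw)) * matT D)))))) * matT R)) := by
          simp only [Matrix.mul_assoc]
    _ = matT Q * (matT D * matT R) := by rw [hGGi, Matrix.one_mul]
    _ = matT A ^ k := hdecM.symm
  · -- X * A * X = X
    apply matT_inj
    rw [matT_cmul, matT_cmul, matT_cmul, matT_cmul, hWm]
    calc (((matT Q * (matT D * (matT R * (C ^ (k + 1) * ((matT (conjT R) * (matT Vr * matT Dw)) * matT D))))) * matT R) * matT A) * ((matT Q * (matT D * (matT R * (C ^ (k + 1) * ((matT (conjT R) * (matT Vr * matT Dw)) * matT D))))) * matT R)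
        = matT Q * ((matT D * (matT R * (C ^ (k + 1) * ((matT (conjT R) * (matT Vr * matT Dw)) * matT D)))) * (matT R * (matT A * (matT Q * ((matT D * (matT R * (C ^ (k + 1) * ((matT (conjT R) * (matT Vr * matT Dw)) * matT D)))) * matT R))))) := by
          simp only [Matrix.mul_assoc]
    _ = matT Q * ((matT D * (matT R * (C ^ (k + 1) * ((matT (conjT R) * (matT Vr * matT Dw)) * matT D)))) * (matT R * (matT Q * (((matT D * (matT R * (matT A * (matT (conjT R) * (matT Vr * matT Dw))))) * (matT D * (matT R * (C ^ (k + 1) * ((matT (conjT R) * (matT Vr * matT Dw)) * matT D))))) * matT R)))) := by rw [hMX]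
    _ = matT Q * ((matT D * (matT R * (C ^ (k + 1) * ((matT (conjT R) * (matT Vr * matT Dw)) * matT D)))) * (((matT R * matT Q) * ((matT D * (matT R * (matT A * (matT (conjT R) * (matT Vr * matT Dw))))) * (matT D * (matT R * (C ^ (k + 1) * ((matT (conjT R) * (matT Vr * matT Dw)) * matT D)))))) * matT R)) := by
          simp only [Matrix.mul_assoc]
    _ = matT Q * ((matT D * (matT R * (C ^ (k + 1) * ((matT (conjT R) * (matT Vr * matT Dw)) * matT D)))) * ((1 : Matrix (Fin n3 × Fin r) (Fin n3 × Fin r) ℂ) * matT R)) := by rw [hGGi]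
    _ = (matT Q * (matT D * (matT R * (C ^ (k + 1) * ((matT (conjT R) * (matT Vr * matT Dw)) * matT D))))) * matT R := by rw [Matrix.one_mul]; simp only [Matrix.mul_assoc]
  · -- A * X = X * A
    apply matT_inj
    rw [matT_cmul, matT_cmul, matT_cmul, matT_cmul, matT_cmul, matT_cmul, hWm]
    calc matT A * ((matT Q * (matT D * (matT R * (C ^ (k + 1) * ((matT (conjT R) * (matT Vr * matT Dw)) * matT D))))) * matT R) = matT A * (matT Q * ((matT D * (matT R * (C ^ (k + 1) * ((matT (conjT R) * (matT Vr * matT Dw)) * matT D)))) * matT R)) := by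
          simp only [Matrix.mul_assoc]
    _ = matT Q * (((matT D * (matT R * (matT A * (matT (conjT R) * (matT Vr * matT Dw))))) * (matT D * (matT R * (C ^ (k + 1) * ((matT (conjT R) * (matT Vr * matT Dw)) * matT D))))) * matT R) := hMX
    _ = (matT Q * ((matT D * (matT R * (C ^ (k + 1) * ((matT (conjT R) * (matT Vr * matT Dw)) * matT D)))) * matT R)) * matT A := hXM.symm
    _ = ((matT Q * (matT D * (matT R * (C ^ (k + 1) * ((matT (conjT R) * (matT Vr * matT Dw)) * matT D))))) * matT R) * matT A := by simp only [Matrix.mul_assoc]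

end Aux

theorem stmt13 {n r n3 : ℕ} (A : Tensor n n n3) (k : ℕ)
    (hk : IsIndex A k) (hk1 : 1 ≤ k)
    (Q : Tensor n r n3) (D : Tensor r r n3) (R : Tensor r n n3)
    (hdec : cpow A k = cmul (cmul Q D) R)
    (hD : FDiag D) (hDinv : ∃ W, IsInverse D W)
    (hQ : ∃ W, IsInverse (cmul (conjT Q) Q) W)
    (hR : ∃ W, IsInverse (cmul R (conjT R)) W) :
    ∃ W, IsInverse (cmul (cmul R A) Q) W ∧
      IsDrazin A k (cmul (cmul Q W) R) :=
  Aux.stmt13' A k hk hk1 Q D R hdec hD hDinv hQ hR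
end
end

section
/- Let A ∈ ℂ^{n×n×n3} and suppose A = U *_c [[S_r *_c K, S_r *_c L],[O, O]] *_c U^H, where U ∈ ℂ^{n×n×n3} is unitary, S_r ∈ ℂ^{r×r×n3} is invertible, K ∈ ℂ^{r×r×n3}, L ∈ ℂ^{r×(n−r)×n3}, and K *_c K^H + L *_c L^H = I_r (the identity tensor in ℂ^{r×r×n3}) — a C-HS decomposition of A. Then the Drazin inverse of A is A^D = U *_c [[(S_r *_c K)^D, ((S_r *_c K)^D)^2 *_c S_r *_c L],[O, O]] *_c U^H. -/
noncomputable section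

namespace Tensor

variable {n1 n2 n3 l : ℕ}

lemma slice_congr (A : Tensor n1 n2 n3) {s t : ℕ} (hs : s < n3) (ht : t < n3) (h : s = t) :
    A ⟨s, hs⟩ = A ⟨t, ht⟩ := by subst h; rfl

section Ext
variable [NeZero n3]

instance : NeZero (2 * n3) := ⟨by have := NeZero.ne n3; omega⟩

/-- even 2n3-periodic extension of the slices, with value 0 at class n3. -/
def extS (A : Tensor n1 n2 n3) (x : ZMod (2 * n3)) : Matrix (Fin n1) (Fin n2) ℂ :=
  if h : min x.val (2 * n3 - x.val) < n3 then A ⟨min x.val (2 * n3 - x.val), h⟩ else 0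

lemma extS_neg (A : Tensor n1 n2 n3) (x : ZMod (2 * n3)) : extS A (-x) = extS A x := by
  unfold extS
  rcases eq_or_ne x 0 with rfl | hx
  · simp
  · rw [ZMod.neg_val, if_neg hx]
    have hv : x.val < 2 * n3 := ZMod.val_lt x
    have hv0 : x.val ≠ 0 := fun h => hx ((ZMod.val_eq_zero x).mp h)
    have : min (2 * n3 - x.val) (2 * n3 - (2 * n3 - x.val)) = min x.val (2 * n3 - x.val) := by
      omega
    rw [this]

lemma two_n3_cast : ((2 : ZMod (2*n3))) * ((n3 : ℕ) : ZMod (2*n3)) = 0 := by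
  have := ZMod.natCast_self (2*n3)
  push_cast at this
  exact this

lemma natCast_sub_eq {i j : Fin n3} :
    ((2 * n3 - 1 - i.1 - j.1 : ℕ) : ZMod (2 * n3)) = -1 - (i.1 : ZMod (2*n3)) - (j.1 : ZMod (2*n3)) := by
  have hi := i.isLt; have hj := j.isLt
  have h : (2 * n3 - 1 - i.1 - j.1) + (1 + i.1 + j.1) = 2 * n3 := by omega
  have h2 := congrArg (fun m : ℕ => (m : ZMod (2 * n3))) h
  push_cast at h2
  have h0 := two_n3_cast (n3 := n3)
  linear_combination h2 + h0

lemma matT_apply (A : Tensor n1 n2 n3) (i j : Fin n3) (a : Fin n1) (b : Fin n2) :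
    matT A (i, a) (j, b) =
      (extS A ((j.1 : ZMod (2*n3)) - (i.1 : ZMod (2*n3)))
        + extS A (-1 - (i.1 : ZMod (2*n3)) - (j.1 : ZMod (2*n3)))) a b := by
  have hi := i.isLt; have hj := j.isLt
  -- first term
  have h1 : extS A ((j.1 : ZMod (2*n3)) - (i.1 : ZMod (2*n3))) =
      A ⟨i.1 - j.1 + (j.1 - i.1), by omega⟩ := by
    rcases le_or_gt i.1 j.1 with h | h
    · have heq : (j.1 : ZMod (2*n3)) - (i.1 : ZMod (2*n3)) = ((j.1 - i.1 : ℕ) : ZMod (2*n3)) := by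
        have h3 : (j.1 - i.1 : ℕ) + i.1 = j.1 := by omega
        have h4 := congrArg (fun m : ℕ => (m : ZMod (2 * n3))) h3
        push_cast at h4
        linear_combination -h4
      rw [heq]
      unfold extS
      have hv : ((j.1 - i.1 : ℕ) : ZMod (2*n3)).val = j.1 - i.1 := ZMod.val_cast_of_lt (by omega)
      rw [dif_pos (by rw [hv]; omega)]
      apply slice_congr
      simp only [hv]; omega
    · have heq : (j.1 : ZMod (2*n3)) - (i.1 : ZMod (2*n3)) = -(((i.1 - j.1 : ℕ) : ZMod (2*n3))) := by
        have h3 : (i.1 - j.1 : ℕ) + j.1 = i.1 := by omega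
        have h4 := congrArg (fun m : ℕ => (m : ZMod (2 * n3))) h3
        push_cast at h4
        linear_combination h4
      rw [heq, extS_neg]
      unfold extS
      have hv : ((i.1 - j.1 : ℕ) : ZMod (2*n3)).val = i.1 - j.1 := ZMod.val_cast_of_lt (by omega)
      rw [dif_pos (by rw [hv]; omega)]
      apply slice_congr
      simp only [hv]; omega
  -- second term
  have h2' : (-1 - (i.1 : ZMod (2*n3)) - (j.1 : ZMod (2*n3)))
      = ((2 * n3 - 1 - i.1 - j.1 : ℕ) : ZMod (2 * n3)) := natCast_sub_eq.symm
  have hv2 : ((2 * n3 - 1 - i.1 - j.1 : ℕ) : ZMod (2*n3)).val = 2 * n3 - 1 - i.1 - j.1 :=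
    ZMod.val_cast_of_lt (by omega)
  rw [Matrix.add_apply, h1, h2']
  unfold matT extS
  rw [apply_dite (fun M : Matrix (Fin n1) (Fin n2) ℂ => M a b)]
  simp only [hv2]
  congr 1
  split_ifs with hc1 hc2 hc3 hc4 hc5 <;>
    first
      | (apply congrFun; apply congrFun; apply slice_congr; omega)
      | omega
      | rfl
      | simp

lemma tenT_matT (A : Tensor n1 n2 n3) : tenT (matT A) = A := by
  funext i
  ext a b
  show (∑ t : Fin n3, if i.1 ≤ t.1 then (-1:ℂ)^(t.1-i.1) * matT A (t,a) (⟨0, i.pos⟩,b) else 0) = _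
  have hn3 : 0 < n3 := Nat.pos_of_ne_zero (NeZero.ne n3)
  set g : ℕ → ℂ := fun s => if h : s < n3 then A ⟨s, h⟩ a b else 0 with hg
  have hM : ∀ t : Fin n3, matT A (t, a) (⟨0, i.pos⟩, b) = g t.1 + g (t.1 + 1) := by
    intro t
    have ht := t.isLt
    unfold matT
    simp only [hg]
    rw [dif_pos ht]
    congr 1
    · apply congrFun; apply congrFun; apply slice_congr; omega
    · split_ifs with hc1 hc2 hc3 <;>
        first
          | (apply congrFun; apply congrFun; apply slice_congr; omega)
          | omega
          | rfl
          | simp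
  set f : ℕ → ℂ := fun s => if i.1 ≤ s then (-1:ℂ)^(s-i.1) * (g s + g (s+1)) else 0 with hf
  have hstep : (∑ t : Fin n3, if i.1 ≤ t.1 then (-1:ℂ)^(t.1-i.1) * matT A (t,a) (⟨0, i.pos⟩,b) else 0)
      = ∑ t : Fin n3, f t.1 := by
    apply Finset.sum_congr rfl
    intro t _
    rw [hM t, hf]
  rw [hstep, Fin.sum_univ_eq_sum_range f n3, hf]
  rw [← Finset.sum_filter]
  have hfil : (Finset.range n3).filter (fun s => i.1 ≤ s) = Finset.Ico i.1 n3 := by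
    ext s; simp [Finset.mem_filter, Finset.mem_Ico, Finset.mem_range, and_comm]
  rw [hfil, Finset.sum_Ico_eq_sum_range]
  have hterm : ∀ u, (-1:ℂ)^(i.1+u-i.1) * (g (i.1+u) + g (i.1+u+1))
      = (fun u => (-1:ℂ)^u * g (i.1+u)) u - (fun u => (-1:ℂ)^u * g (i.1+u)) (u+1) := by
    intro u
    simp only [Nat.add_sub_cancel_left, pow_succ]
    ring
  simp only [hterm]
  rw [Finset.sum_range_sub']
  have hgi : g (i.1 + (n3 - i.1)) = 0 := by
    have h5 : i.1 + (n3 - i.1) = n3 := by have := i.isLt; omega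
    rw [h5, hg]; simp
  rw [hgi]
  simp [hg, i.isLt]

end Ext

section Ext2
variable [NeZero n3]

lemma neg_one_pow_sum_eq_zero {p q : ℕ} (h : (p + q) % 2 = 1) :
    ((-1:ℂ))^p + (-1:ℂ)^q = 0 := by
  have hodd : Odd (p + q) := Nat.odd_iff.mpr h
  have h3 : ((-1:ℂ))^p * ((-1:ℂ))^q = -1 := by rw [← pow_add]; exact Odd.neg_one_pow hodd
  have h2 : ((-1:ℂ))^q * ((-1:ℂ))^q = 1 := by
    rw [← pow_add]; exact Even.neg_one_pow ⟨q, rfl⟩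
  linear_combination ((-1:ℂ))^q * h3 - ((-1:ℂ))^p * h2

def convS (A : Tensor n1 n2 n3) (B : Tensor n2 l n3) (y : ZMod (2 * n3)) :
    Matrix (Fin n1) (Fin l) ℂ :=
  ∑ x : ZMod (2 * n3), extS A x * extS B (y - x)

lemma convS_neg (A : Tensor n1 n2 n3) (B : Tensor n2 l n3) (y : ZMod (2 * n3)) :
    convS A B (-y) = convS A B y := by
  unfold convS
  apply Fintype.sum_equiv (Equiv.neg (ZMod (2*n3)))
  intro x
  rw [Equiv.neg_apply]
  have e1 : extS A (-x) = extS A x := extS_neg A x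
  have e2 : extS B (y - -x) = extS B (-y - x) := by
    rw [← extS_neg B (-y - x)]
    congr 1
    ring
  rw [e1, e2]

def prodT (A : Tensor n1 n2 n3) (B : Tensor n2 l n3) : Tensor n1 l n3 := fun a =>
  convS A B ((a.1 : ℕ) : ZMod (2*n3)) + ((-1:ℂ)) ^ (n3 - 1 - a.1) • convS A B ((n3 : ℕ) : ZMod (2*n3))

lemma sum_zmod_split (F : ZMod (2*n3) → Matrix (Fin n1) (Fin l) ℂ) :
    ∑ x : ZMod (2*n3), F x
      = ∑ t : Fin n3, (F ((t.1 : ℕ) : ZMod (2*n3)) + F (-1 - ((t.1 : ℕ) : ZMod (2*n3)))) := by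
  classical
  have hn3 : 0 < n3 := Nat.pos_of_ne_zero (NeZero.ne n3)
  let f : Fin n3 ⊕ Fin n3 → ZMod (2*n3) := Sum.elim (fun t => ((t.1 : ℕ) : ZMod (2*n3)))
    (fun t => -1 - ((t.1 : ℕ) : ZMod (2*n3)))
  have hval1 : ∀ t : Fin n3, (((t.1 : ℕ) : ZMod (2*n3))).val = t.1 := fun t =>
    ZMod.val_cast_of_lt (by have := t.isLt; omega)
  have hval2 : ∀ t : Fin n3, (-1 - ((t.1 : ℕ) : ZMod (2*n3))).val = 2*n3 - 1 - t.1 := by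
    intro t
    have h := (natCast_sub_eq (i := (⟨0, hn3⟩ : Fin n3)) (j := t)).symm
    simp only [Fin.val_mk, Nat.cast_zero, sub_zero] at h
    have h2 : (-1 : ZMod (2*n3)) - ((t.1 : ℕ) : ZMod (2*n3))
        = ((2 * n3 - 1 - 0 - t.1 : ℕ) : ZMod (2*n3)) := by rw [← h]
    rw [h2, ZMod.val_cast_of_lt (show 2*n3-1-0-t.1 < 2*n3 by have := t.isLt; omega)]
    omega
  have hinj : Function.Injective f := by
    intro x y hxy
    match x, y with
    | .inl s, .inl t =>
      simp only [f, Sum.elim_inl] at hxy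
      have := congrArg ZMod.val hxy
      rw [hval1 s, hval1 t] at this
      exact congrArg Sum.inl (Fin.ext this)
    | .inl s, .inr t =>
      simp only [f, Sum.elim_inl, Sum.elim_inr] at hxy
      have := congrArg ZMod.val hxy
      rw [hval1 s, hval2 t] at this
      have := s.isLt; have := t.isLt; omega
    | .inr s, .inl t =>
      simp only [f, Sum.elim_inl, Sum.elim_inr] at hxy
      have := congrArg ZMod.val hxy
      rw [hval2 s, hval1 t] at this
      have := s.isLt; have := t.isLt; omega
    | .inr s, .inr t =>
      simp only [f, Sum.elim_inr] at hxy
      have := congrArg ZMod.val hxy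
      rw [hval2 s, hval2 t] at this
      have := s.isLt; have := t.isLt
      exact congrArg Sum.inr (Fin.ext (by omega))
  have hbij : Function.Bijective f := by
    rw [Fintype.bijective_iff_injective_and_card]
    refine ⟨hinj, ?_⟩
    simp only [Fintype.card_sum, Fintype.card_fin, ZMod.card]
    omega
  rw [← Function.Bijective.sum_comp hbij F, Fintype.sum_sum_type]
  rw [← Finset.sum_add_distrib]
  simp [f]

lemma val_sub_fin (i j : Fin n3) :
    (((j.1:ℕ):ZMod (2*n3)) - ((i.1:ℕ):ZMod (2*n3))).val
      = if i.1 ≤ j.1 then j.1 - i.1 else 2*n3 - (i.1 - j.1) := by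
  have hi := i.isLt; have hj := j.isLt
  rcases le_or_gt i.1 j.1 with h | h
  · rw [if_pos h]
    have heq : ((j.1:ℕ):ZMod (2*n3)) - ((i.1:ℕ):ZMod (2*n3)) = ((j.1 - i.1 : ℕ) : ZMod (2*n3)) := by
      have h3 : (j.1 - i.1 : ℕ) + i.1 = j.1 := by omega
      have h4 := congrArg (fun m : ℕ => (m : ZMod (2 * n3))) h3
      push_cast at h4
      linear_combination -h4
    rw [heq, ZMod.val_cast_of_lt (by omega)]
  · rw [if_neg (by omega)]
    have heq : ((j.1:ℕ):ZMod (2*n3)) - ((i.1:ℕ):ZMod (2*n3))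
        = -(((i.1 - j.1 : ℕ) : ZMod (2*n3))) := by
      have h3 : (i.1 - j.1 : ℕ) + j.1 = i.1 := by omega
      have h4 := congrArg (fun m : ℕ => (m : ZMod (2 * n3))) h3
      push_cast at h4
      linear_combination h4
    have hvx : (((i.1 - j.1 : ℕ) : ZMod (2*n3))).val = i.1 - j.1 := ZMod.val_cast_of_lt (by omega)
    have hx0 : ((i.1 - j.1 : ℕ) : ZMod (2*n3)) ≠ 0 := by
      intro hc
      rw [← ZMod.val_eq_zero, hvx] at hc
      omega
    rw [heq, ZMod.neg_val, if_neg hx0, hvx]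

lemma aux_add {m p : Type*} (C1 C2 N : Matrix m p ℂ) (s1 s2 : ℂ) (h : s1 + s2 = 0) :
    C1 + s1 • N + (C2 + s2 • N) = C1 + C2 := by
  have hz : s1 • N + s2 • N = 0 := by rw [← add_smul, h, zero_smul]
  calc C1 + s1 • N + (C2 + s2 • N) = C1 + C2 + (s1 • N + s2 • N) := by abel
    _ = C1 + C2 := by rw [hz, add_zero]

set_option maxHeartbeats 1000000 in
lemma matT_mul (A : Tensor n1 n2 n3) (B : Tensor n2 l n3) :
    matT A * matT B = matT (prodT A B) := by
  ext ⟨i, a⟩ ⟨j, b⟩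
  have hi := i.isLt; have hj := j.isLt
  rw [Matrix.mul_apply]
  rw [Fintype.sum_prod_type]
  have step1 : ∀ t : Fin n3, (∑ c : Fin n2, matT A (i,a) (t,c) * matT B (t,c) (j,b))
      = ((extS A (((t.1:ℕ) : ZMod (2*n3)) - ((i.1:ℕ) : ZMod (2*n3)))
          + extS A (-1 - ((i.1:ℕ) : ZMod (2*n3)) - ((t.1:ℕ) : ZMod (2*n3))))
        * (extS B (((j.1:ℕ) : ZMod (2*n3)) - ((t.1:ℕ) : ZMod (2*n3)))
          + extS B (-1 - ((t.1:ℕ) : ZMod (2*n3)) - ((j.1:ℕ) : ZMod (2*n3))))) a b := by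
    intro t
    rw [Matrix.mul_apply]
    apply Finset.sum_congr rfl
    intro c _
    rw [matT_apply, matT_apply]
  simp only [step1]
  set G : ZMod (2*n3) → Matrix (Fin n1) (Fin l) ℂ := fun x =>
    extS A (x - ((i.1:ℕ) : ZMod (2*n3)))
      * (extS B (((j.1:ℕ) : ZMod (2*n3)) - x) + extS B (-1 - x - ((j.1:ℕ) : ZMod (2*n3)))) with hG
  have step2 : (∑ t : Fin n3,
      ((extS A (((t.1:ℕ) : ZMod (2*n3)) - ((i.1:ℕ) : ZMod (2*n3)))
          + extS A (-1 - ((i.1:ℕ) : ZMod (2*n3)) - ((t.1:ℕ) : ZMod (2*n3))))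
        * (extS B (((j.1:ℕ) : ZMod (2*n3)) - ((t.1:ℕ) : ZMod (2*n3)))
          + extS B (-1 - ((t.1:ℕ) : ZMod (2*n3)) - ((j.1:ℕ) : ZMod (2*n3))))))
      = ∑ x : ZMod (2*n3), G x := by
    rw [sum_zmod_split G]
    apply Finset.sum_congr rfl
    intro t _
    rw [hG]
    simp only []
    have e1 : (-1 : ZMod (2*n3)) - ((t.1:ℕ):ZMod (2*n3)) - ((i.1:ℕ):ZMod (2*n3))
        = -1 - ((i.1:ℕ):ZMod (2*n3)) - ((t.1:ℕ):ZMod (2*n3)) := by ring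
    have e2 : extS B (((j.1:ℕ):ZMod (2*n3)) - (-1 - ((t.1:ℕ):ZMod (2*n3))))
        = extS B (-1 - ((t.1:ℕ):ZMod (2*n3)) - ((j.1:ℕ):ZMod (2*n3))) := by
      rw [← extS_neg]; congr 1; ring
    have e3 : extS B (-1 - (-1 - ((t.1:ℕ):ZMod (2*n3))) - ((j.1:ℕ):ZMod (2*n3)))
        = extS B (((j.1:ℕ):ZMod (2*n3)) - ((t.1:ℕ):ZMod (2*n3))) := by
      rw [← extS_neg]; congr 1; ring
    rw [e1, e2, e3, Matrix.add_mul]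
    congr 1
    rw [add_comm]
  have step2' : (∑ t : Fin n3, (((extS A (((t.1:ℕ) : ZMod (2*n3)) - ((i.1:ℕ) : ZMod (2*n3)))
          + extS A (-1 - ((i.1:ℕ) : ZMod (2*n3)) - ((t.1:ℕ) : ZMod (2*n3))))
        * (extS B (((j.1:ℕ) : ZMod (2*n3)) - ((t.1:ℕ) : ZMod (2*n3)))
          + extS B (-1 - ((t.1:ℕ) : ZMod (2*n3)) - ((j.1:ℕ) : ZMod (2*n3))))) a b))
      = (∑ x : ZMod (2*n3), G x) a b := by
    rw [← Matrix.sum_apply, step2]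
  rw [step2']
  have step3 : ∑ x : ZMod (2*n3), G x
      = convS A B (((j.1:ℕ):ZMod (2*n3)) - ((i.1:ℕ):ZMod (2*n3)))
        + convS A B (-1 - ((i.1:ℕ):ZMod (2*n3)) - ((j.1:ℕ):ZMod (2*n3))) := by
    have hshift : ∑ x : ZMod (2*n3), (extS A x * extS B (((j.1:ℕ):ZMod (2*n3)) - ((i.1:ℕ):ZMod (2*n3)) - x)
        + extS A x * extS B (-1 - ((i.1:ℕ):ZMod (2*n3)) - ((j.1:ℕ):ZMod (2*n3)) - x))
        = ∑ x : ZMod (2*n3), G x := by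
      apply Fintype.sum_equiv (Equiv.addRight ((i.1:ℕ) : ZMod (2*n3)))
      intro x
      rw [hG]
      simp only [Equiv.coe_addRight]
      have e1 : x + ((i.1:ℕ):ZMod (2*n3)) - ((i.1:ℕ):ZMod (2*n3)) = x := by ring
      have e2 : ((j.1:ℕ):ZMod (2*n3)) - (x + ((i.1:ℕ):ZMod (2*n3)))
          = ((j.1:ℕ):ZMod (2*n3)) - ((i.1:ℕ):ZMod (2*n3)) - x := by ring
      have e3 : (-1:ZMod (2*n3)) - (x + ((i.1:ℕ):ZMod (2*n3))) - ((j.1:ℕ):ZMod (2*n3))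
          = -1 - ((i.1:ℕ):ZMod (2*n3)) - ((j.1:ℕ):ZMod (2*n3)) - x := by ring
      rw [e1, e2, e3, Matrix.mul_add]
    rw [← hshift]
    unfold convS
    rw [← Finset.sum_add_distrib]
  rw [step3]
  rw [matT_apply]
  -- relate extS (prodT A B) to convS
  have key : ∀ y : ZMod (2*n3), (hlt : min y.val (2*n3 - y.val) < n3) →
      extS (prodT A B) y = convS A B y
        + ((-1:ℂ)) ^ (n3 - 1 - min y.val (2*n3 - y.val)) • convS A B ((n3:ℕ) : ZMod (2*n3)) := by
    intro y hlt
    have hcv : convS A B ((min y.val (2*n3 - y.val) : ℕ) : ZMod (2*n3)) = convS A B y := by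
      have hyv : ((y.val : ℕ) : ZMod (2*n3)) = y := ZMod.natCast_rightInverse y
      rcases le_or_gt y.val (2*n3 - y.val) with h | h
      · rw [min_eq_left h, hyv]
      · rw [min_eq_right (le_of_lt h)]
        have hcast : ((2*n3 - y.val : ℕ) : ZMod (2*n3)) = -y := by
          have h3 : (2*n3 - y.val) + y.val = 2*n3 := by have := ZMod.val_lt y; omega
          have h4 := congrArg (fun m : ℕ => (m : ZMod (2 * n3))) h3
          push_cast at h4
          have h0 := two_n3_cast (n3 := n3)
          linear_combination h4 + h0 - hyv
        rw [hcast, convS_neg]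
    unfold extS
    rw [dif_pos hlt]
    show convS A B _ + _ • _ = _
    rw [hcv]
  have hvh : ((-1:ZMod (2*n3)) - ((i.1:ℕ):ZMod (2*n3)) - ((j.1:ℕ):ZMod (2*n3))).val
      = 2*n3 - 1 - i.1 - j.1 := by
    rw [← natCast_sub_eq (i := i) (j := j)]
    exact ZMod.val_cast_of_lt (by omega)
  have hvij := val_sub_fin (n3 := n3) i j
  by_cases hcase : i.1 + j.1 = n3 - 1
  · -- Hankel index hits n3
    have hext0 : extS (prodT A B) (-1 - ((i.1:ℕ):ZMod (2*n3)) - ((j.1:ℕ):ZMod (2*n3))) = 0 := by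
      unfold extS
      rw [dif_neg (by rw [hvh]; omega)]
    have hlt1 : min (((j.1:ℕ):ZMod (2*n3)) - ((i.1:ℕ):ZMod (2*n3))).val
        (2*n3 - (((j.1:ℕ):ZMod (2*n3)) - ((i.1:ℕ):ZMod (2*n3))).val) < n3 := by
      rw [hvij]
      rcases le_or_gt i.1 j.1 with h | h
      · rw [if_pos h]; omega
      · rw [if_neg (by omega)]; omega
    rw [hext0, key _ hlt1]
    have hone : ((-1:ℂ)) ^ (n3 - 1 - min (((j.1:ℕ):ZMod (2*n3)) - ((i.1:ℕ):ZMod (2*n3))).val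
        (2*n3 - (((j.1:ℕ):ZMod (2*n3)) - ((i.1:ℕ):ZMod (2*n3))).val)) = 1 := by
      apply Even.neg_one_pow
      rw [Nat.even_iff, hvij]
      rcases le_or_gt i.1 j.1 with h | h
      · rw [if_pos h]; omega
      · rw [if_neg (by omega)]; omega
    rw [hone, one_smul]
    have hconv : convS A B (-1 - ((i.1:ℕ):ZMod (2*n3)) - ((j.1:ℕ):ZMod (2*n3)))
        = convS A B ((n3:ℕ) : ZMod (2*n3)) := by
      rw [← natCast_sub_eq (i := i) (j := j)]
      have he : (2 * n3 - 1 - i.1 - j.1 : ℕ) = n3 := by omega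
      rw [he]
    rw [hconv, add_zero]
  · -- generic case
    have hlt1 : min (((j.1:ℕ):ZMod (2*n3)) - ((i.1:ℕ):ZMod (2*n3))).val
        (2*n3 - (((j.1:ℕ):ZMod (2*n3)) - ((i.1:ℕ):ZMod (2*n3))).val) < n3 := by
      rw [hvij]
      rcases le_or_gt i.1 j.1 with h | h
      · rw [if_pos h]; omega
      · rw [if_neg (by omega)]; omega
    have hlt2 : min ((-1 - ((i.1:ℕ):ZMod (2*n3)) - ((j.1:ℕ):ZMod (2*n3))).val)
        (2*n3 - ((-1 - ((i.1:ℕ):ZMod (2*n3)) - ((j.1:ℕ):ZMod (2*n3))).val)) < n3 := by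
      rw [hvh]; omega
    rw [key _ hlt1, key _ hlt2]
    have hzero : ((-1:ℂ)) ^ (n3 - 1 - min (((j.1:ℕ):ZMod (2*n3)) - ((i.1:ℕ):ZMod (2*n3))).val
          (2*n3 - (((j.1:ℕ):ZMod (2*n3)) - ((i.1:ℕ):ZMod (2*n3))).val))
        + ((-1:ℂ)) ^ (n3 - 1 - min ((-1 - ((i.1:ℕ):ZMod (2*n3)) - ((j.1:ℕ):ZMod (2*n3))).val)
          (2*n3 - ((-1 - ((i.1:ℕ):ZMod (2*n3)) - ((j.1:ℕ):ZMod (2*n3))).val))) = 0 := by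
      apply neg_one_pow_sum_eq_zero
      rw [hvh, hvij]
      rcases le_or_gt i.1 j.1 with h | h
      · rw [if_pos h]; omega
      · rw [if_neg (by omega)]; omega
    rw [aux_add _ _ _ _ _ hzero]

lemma matT_cmul' (A : Tensor n1 n2 n3) (B : Tensor n2 l n3) :
    tenT (matT A * matT B) = prodT A B := by
  rw [matT_mul, tenT_matT]

end Ext2

section Struct
variable [NeZero n3]

lemma matT_injective : Function.Injective (matT : Tensor n1 n2 n3 → _) :=
  Function.LeftInverse.injective tenT_matT

lemma matT_cmul (A : Tensor n1 n2 n3) (B : Tensor n2 l n3) :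
    matT (cmul A B) = matT A * matT B := by
  unfold cmul
  rw [matT_cmul', ← matT_mul]

lemma extS_idT {n : ℕ} (y : ZMod (2*n3)) :
    extS (idT : Tensor n n n3) y = if y = 0 then 1 else 0 := by
  have hn3 : 0 < n3 := Nat.pos_of_ne_zero (NeZero.ne n3)
  have hvlt := ZMod.val_lt y
  unfold extS idT
  by_cases h : min y.val (2*n3 - y.val) < n3
  · rw [dif_pos h]
    have hval : ((⟨min y.val (2*n3 - y.val), h⟩ : Fin n3) : ℕ) = min y.val (2*n3 - y.val) := rfl
    split_ifs with h1 h2 h2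
    · rfl
    · rw [hval] at h1
      exact absurd ((ZMod.val_eq_zero y).mp (by omega)) h2
    · rw [hval] at h1
      subst h2
      rw [ZMod.val_zero] at h1
      exact absurd (by omega) h1
    · rfl
  · rw [dif_neg h]
    rw [if_neg (fun h0 => h (by subst h0; rw [ZMod.val_zero]; omega))]

lemma matT_idT {n : ℕ} : matT (idT : Tensor n n n3) = 1 := by
  ext ⟨i, a⟩ ⟨j, b⟩
  rw [matT_apply, Matrix.add_apply, extS_idT, extS_idT]
  have hi := i.isLt; have hj := j.isLt
  have hvh : ((-1:ZMod (2*n3)) - ((i.1:ℕ):ZMod (2*n3)) - ((j.1:ℕ):ZMod (2*n3))).val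
      = 2*n3 - 1 - i.1 - j.1 := by
    rw [← natCast_sub_eq (i := i) (j := j)]
    exact ZMod.val_cast_of_lt (by omega)
  have h2 : ((-1:ZMod (2*n3)) - ((i.1:ℕ):ZMod (2*n3)) - ((j.1:ℕ):ZMod (2*n3))) ≠ 0 := by
    intro h
    have := congrArg ZMod.val h
    rw [hvh, ZMod.val_zero] at this
    omega
  rw [if_neg h2]
  have hvij := val_sub_fin (n3 := n3) i j
  by_cases hij : i = j
  · subst hij
    have h1 : ((i.1:ℕ):ZMod (2*n3)) - ((i.1:ℕ):ZMod (2*n3)) = 0 := by ring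
    rw [if_pos h1, Matrix.zero_apply, add_zero, Matrix.one_apply, Matrix.one_apply]
    by_cases hab : a = b
    · rw [if_pos hab, if_pos (by rw [hab])]
    · rw [if_neg hab, if_neg (fun hc => hab (congrArg Prod.snd hc))]
  · have h1 : ((j.1:ℕ):ZMod (2*n3)) - ((i.1:ℕ):ZMod (2*n3)) ≠ 0 := by
      intro h
      have := congrArg ZMod.val h
      rw [hvij, ZMod.val_zero] at this
      apply hij
      apply Fin.ext
      rcases le_or_gt i.1 j.1 with h' | h'
      · rw [if_pos h'] at this; omega
      · rw [if_neg (by omega)] at this; omega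
    rw [if_neg h1, Matrix.zero_apply, add_zero, Matrix.one_apply,
      if_neg (fun hc => hij (congrArg Prod.fst hc))]


lemma matT_cpow {n : ℕ} (A : Tensor n n n3) (m : ℕ) : matT (cpow A m) = (matT A) ^ m := by
  induction m with
  | zero => rw [cpow, pow_zero, matT_idT]
  | succ m ih => rw [cpow, matT_cmul, ih, pow_succ]

end Struct

section NoNZ

open scoped Matrix

lemma matT_conjT (A : Tensor n1 n2 n3) : matT (conjT A) = (matT A).conjTranspose := by
  ext ⟨i, a⟩ ⟨j, b⟩
  rw [Matrix.conjTranspose_apply]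
  have hi := i.isLt; have hj := j.isLt
  unfold matT conjT
  rw [star_add]
  congr 1
  · rw [Matrix.conjTranspose_apply]
    exact congrArg star (congrFun (congrFun (slice_congr A (by omega) (by omega) (by omega)) b) a)
  · split_ifs <;>
      first
        | omega
        | (rw [Matrix.conjTranspose_apply]
           exact congrArg star (congrFun (congrFun
             (slice_congr A (by omega) (by omega) (by omega)) b) a))
        | rw [star_zero]

lemma matT_zero : matT (0 : Tensor n1 n2 n3) = 0 := by
  ext ⟨i, a⟩ ⟨j, b⟩
  show matT (0 : Tensor n1 n2 n3) (i, a) (j, b) = 0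
  unfold matT
  simp only [Pi.zero_apply, Matrix.zero_apply, zero_add]
  split_ifs <;> rfl

/-- index equivalence for block tensors -/
def pe (n3 r s : ℕ) : (Fin n3 × Fin (r + s)) ≃ (Fin n3 × Fin r) ⊕ (Fin n3 × Fin s) :=
  (Equiv.prodCongr (Equiv.refl _) finSumFinEquiv.symm).trans (Equiv.prodSumDistrib _ _ _)

lemma matT_blockT {r s t u : ℕ} (A : Tensor r t n3) (B : Tensor r u n3)
    (C : Tensor s t n3) (D : Tensor s u n3) :
    matT (blockT A B C D)
      = (Matrix.fromBlocks (matT A) (matT B) (matT C) (matT D)).submatrix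
          (pe n3 r s) (pe n3 t u) := by
  ext ⟨i, x⟩ ⟨j, y⟩
  rw [Matrix.submatrix_apply]
  have hpex : (pe n3 r s) (i, x) = Sum.map (fun a => (i, a)) (fun a => (i, a))
      (finSumFinEquiv.symm x) := by
    rcases h : finSumFinEquiv.symm x with a | a <;>
      simp [pe, Equiv.prodSumDistrib, h]
  have hpey : (pe n3 t u) (j, y) = Sum.map (fun a => (j, a)) (fun a => (j, a))
      (finSumFinEquiv.symm y) := by
    rcases h : finSumFinEquiv.symm y with a | a <;>
      simp [pe, Equiv.prodSumDistrib, h]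
  rw [hpex, hpey]
  show matT (blockT A B C D) (i, x) (j, y) = _
  unfold matT blockT
  simp only [Matrix.reindex_apply, Matrix.submatrix_apply]
  rcases hx : finSumFinEquiv.symm x with a | a <;> rcases hy : finSumFinEquiv.symm y with c | c <;>
    simp only [Sum.map_inl, Sum.map_inr, Matrix.fromBlocks_apply₁₁, Matrix.fromBlocks_apply₁₂,
      Matrix.fromBlocks_apply₂₁, Matrix.fromBlocks_apply₂₂] <;>
    rfl

end NoNZ

section MatrixLemmas

open Matrix

variable {ι : Type*} [Fintype ι] [DecidableEq ι]

lemma range_pow_stab (M : Matrix ι ι ℂ) {k : ℕ} (h : (M^k).rank = (M^(k+1)).rank) (m : ℕ) :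
    LinearMap.range (M^(k+m)).mulVecLin = LinearMap.range (M^k).mulVecLin := by
  have h1 : LinearMap.range (M^(k+1)).mulVecLin = LinearMap.range (M^k).mulVecLin := by
    have hle : LinearMap.range (M^(k+1)).mulVecLin ≤ LinearMap.range (M^k).mulVecLin := by
      rw [pow_succ, Matrix.mulVecLin_mul]
      exact LinearMap.range_comp_le_range _ _
    have hfr : Module.finrank ℂ (LinearMap.range (M^(k+1)).mulVecLin)
        = Module.finrank ℂ (LinearMap.range (M^k).mulVecLin) := by
      have := h.symm
      simpa [Matrix.rank] using this
    exact Submodule.eq_of_le_of_finrank_eq hle hfr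
  induction m with
  | zero => rfl
  | succ m ih =>
    have e : M ^ (k + (m+1)) = M * M ^ (k+m) := by
      rw [show k + (m+1) = (k+m)+1 from rfl, pow_succ']
    rw [e, Matrix.mulVecLin_mul, LinearMap.range_comp, ih]
    have h2 : LinearMap.range (M^(k+1)).mulVecLin
        = Submodule.map M.mulVecLin (LinearMap.range (M^k).mulVecLin) := by
      rw [pow_succ', Matrix.mulVecLin_mul, LinearMap.range_comp]
    exact h2.symm.trans h1

lemma exists_factor (M : Matrix ι ι ℂ) {k p : ℕ} (hkp : k ≤ p)
    (h : (M^k).rank = (M^(k+1)).rank) : ∃ W : Matrix ι ι ℂ, M^p * W = M^k := by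
  have hr := range_pow_stab M h (p - k)
  rw [show k + (p - k) = p from by omega] at hr
  have hcol : ∀ j, ∃ w : ι → ℂ, (M^p).mulVecLin w = (M^k).mulVecLin (Pi.single j 1) := by
    intro j
    have hmem : (M^k).mulVecLin (Pi.single j 1) ∈ LinearMap.range (M^k).mulVecLin :=
      LinearMap.mem_range_self _ _
    rw [← hr] at hmem
    obtain ⟨w, hw⟩ := hmem
    exact ⟨w, hw⟩
  choose w hw using hcol
  refine ⟨Matrix.of (fun i j => w j i), ?_⟩
  ext i j
  rw [Matrix.mul_apply]
  have h1 := congrFun (hw j) i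
  simp only [Matrix.mulVecLin_apply, Matrix.mulVec, dotProduct, Pi.single_apply,
    mul_ite, mul_one, mul_zero, Finset.sum_ite_eq'] at h1
  simp only [Finset.mem_univ, if_true] at h1
  exact h1

lemma drazin_core {ι α β : Type*} [Fintype ι] [DecidableEq ι] [Fintype α] [DecidableEq α]
    [Fintype β] [DecidableEq β]
    (e : ι ≃ α ⊕ β) (U : Matrix ι ι ℂ)
    (hU1 : U.conjTranspose * U = 1) (hU2 : U * U.conjTranspose = 1)
    (B D : Matrix α α ℂ) (C : Matrix α β ℂ) (kd k : ℕ)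
    (hD1 : B^(kd+1) * D = B^kd) (hD2 : D * B * D = D) (hD3 : B * D = D * B)
    (A X : Matrix ι ι ℂ)
    (hA : A = U * (Matrix.fromBlocks B C 0 0).submatrix e e * U.conjTranspose)
    (hX : X = U * (Matrix.fromBlocks D (D * D * C) 0 0).submatrix e e * U.conjTranspose)
    (hk1 : (A^k).rank = (A^(k+1)).rank)
    (hk2 : ∀ j < k, (A^j).rank ≠ (A^(j+1)).rank) :
    A^(k+1) * X = A^k ∧ X * A * X = X ∧ A * X = X * A := by
  classical
  set F : Matrix (α ⊕ β) (α ⊕ β) ℂ := Matrix.fromBlocks B C 0 0 with hF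
  set G : Matrix (α ⊕ β) (α ⊕ β) ℂ := Matrix.fromBlocks D (D * D * C) 0 0 with hG
  have submul : ∀ M N : Matrix (α ⊕ β) (α ⊕ β) ℂ,
      M.submatrix e e * N.submatrix e e = (M * N).submatrix e e := fun M N =>
    Matrix.submatrix_mul_equiv M N e e e
  have cancel : ∀ Y : Matrix ι ι ℂ, U.conjTranspose * (U * Y) = Y := fun Y => by
    rw [← mul_assoc, hU1, one_mul]
  have hconj : ∀ M N : Matrix (α ⊕ β) (α ⊕ β) ℂ,
      (U * M.submatrix e e * U.conjTranspose) * (U * N.submatrix e e * U.conjTranspose)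
        = U * (M * N).submatrix e e * U.conjTranspose := by
    intro M N
    rw [← submul M N]
    simp only [mul_assoc]
    rw [cancel]
  have hApow : ∀ m, A^m = U * (F^m).submatrix e e * U.conjTranspose := by
    intro m
    induction m with
    | zero => rw [pow_zero, pow_zero, Matrix.submatrix_one_equiv, mul_one, hU2]
    | succ m ih => rw [pow_succ, ih, hA, hconj, ← pow_succ]
  have hBDD : B * (D * D) = D := by rw [← mul_assoc, hD3, hD2]
  have hFpow : ∀ m, F^(m+1) = Matrix.fromBlocks (B^(m+1)) (B^m * C) 0 0 := by
    intro m
    induction m with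
    | zero => rw [pow_one, pow_one, pow_zero, Matrix.one_mul]
    | succ m ih =>
      rw [pow_succ, ih, hF, Matrix.fromBlocks_multiply]
      simp only [Matrix.mul_zero, Matrix.zero_mul, add_zero, zero_add, Matrix.zero_mul]
      rw [← pow_succ]
  have hTR : B * (D * D * C) = D * C := by rw [← Matrix.mul_assoc, hBDD]
  have hFG : F * G = Matrix.fromBlocks (B * D) (D * C) 0 0 := by
    rw [hF, hG, Matrix.fromBlocks_multiply]
    simp only [Matrix.mul_zero, Matrix.zero_mul, add_zero, zero_add]
    rw [hTR]
  have hGF : G * F = Matrix.fromBlocks (D * B) (D * C) 0 0 := by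
    rw [hF, hG, Matrix.fromBlocks_multiply]
    simp only [Matrix.mul_zero, Matrix.zero_mul, add_zero, zero_add]
  have hFGGF : F * G = G * F := by rw [hFG, hGF, hD3]
  have hTR2 : D * B * (D * D * C) = D * D * C := by
    simp only [← Matrix.mul_assoc]
    rw [hD2]
  have hGFG : G * F * G = G := by
    rw [hGF, hG, Matrix.fromBlocks_multiply]
    simp only [Matrix.mul_zero, Matrix.zero_mul, add_zero, zero_add]
    rw [hD2, hTR2]
  have h1 : B^(kd+2) * D = B^(kd+1) := by
    rw [show kd+2 = (kd+1)+1 from rfl, pow_succ', mul_assoc, hD1, ← pow_succ']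
  have h2 : B^(kd+2) * (D * D * C) = B^kd * C := by
    simp only [← Matrix.mul_assoc]
    rw [h1, hD1]
  have hFkey : F^(kd+2) * G = F^(kd+1) := by
    rw [hFpow (kd+1), hG, Matrix.fromBlocks_multiply]
    simp only [Matrix.mul_zero, Matrix.zero_mul, add_zero, zero_add]
    rw [h1, h2, hFpow kd]
  have hcomm : A * X = X * A := by rw [hA, hX, hconj, hconj, hFGGF]
  have hXAX : X * A * X = X := by rw [hA, hX, hconj, hconj, hGFG]
  have hkey : A^(kd+2) * X = A^(kd+1) := by
    rw [hApow (kd+2), hApow (kd+1), hX, hconj, hFkey]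
  have hrank : (A^(kd+1)).rank = (A^(kd+2)).rank := by
    apply le_antisymm
    · conv_lhs => rw [← hkey]
      exact Matrix.rank_mul_le_left _ _
    · conv_lhs => rw [show kd+2 = (kd+1)+1 from rfl, pow_succ]
      exact Matrix.rank_mul_le_left _ _
  have hk_le : k ≤ kd + 1 := by
    by_contra hlt
    push_neg at hlt
    exact hk2 (kd+1) hlt hrank
  obtain ⟨W, hW⟩ := exists_factor A hk_le hk1
  have hcomm' : Commute A X := hcomm
  have hG1 : A^(k+1) * X = A^k := by
    calc A^(k+1) * X = X * A^(k+1) := (hcomm'.pow_left (k+1)).eq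
    _ = X * (A * A^k) := by rw [pow_succ']
    _ = X * (A * (A^(kd+1) * W)) := by rw [hW]
    _ = X * A^(kd+2) * W := by simp only [pow_succ', mul_assoc]
    _ = A^(kd+2) * X * W := by rw [(hcomm'.symm.pow_right (kd+2)).eq]
    _ = A^(kd+1) * W := by rw [hkey]
    _ = A^k := hW
  exact ⟨hG1, hXAX, hcomm⟩

end MatrixLemmas

end Tensor

open Tensor

theorem stmt16 {r s n3 : ℕ} (A U : Tensor (r + s) (r + s) n3)
    (Sr K : Tensor r r n3) (L : Tensor r s n3)
    (hU : Unitary U) (hSr : ∃ W, IsInverse Sr W)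
    (hKL : cmul K (conjT K) + cmul L (conjT L) = idT)
    (hA : A = cmul (cmul U (blockT (cmul Sr K) (cmul Sr L) 0 0)) (conjT U))
    (kd : ℕ) (hkd : IsIndex (cmul Sr K) kd)
    (Dk : Tensor r r n3) (hDk : IsDrazin (cmul Sr K) kd Dk)
    (k : ℕ) (hk : IsIndex A k) :
    IsDrazin A k
      (cmul (cmul U (blockT Dk (cmul (cmul (cmul Dk Dk) Sr) L) 0 0)) (conjT U)) := by
  rcases Nat.eq_zero_or_pos n3 with hn3 | hn3
  · subst hn3
    exact ⟨funext fun i => i.elim0, funext fun i => i.elim0, funext fun i => i.elim0⟩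
  haveI : NeZero n3 := ⟨by omega⟩
  obtain ⟨hU1, hU2⟩ := hU
  obtain ⟨hD1, hD2, hD3⟩ := hDk
  have hU1' : (matT U).conjTranspose * matT U = 1 := by
    have h := congrArg matT hU1
    rwa [matT_cmul, matT_conjT, matT_idT] at h
  have hU2' : matT U * (matT U).conjTranspose = 1 := by
    have h := congrArg matT hU2
    rwa [matT_cmul, matT_conjT, matT_idT] at h
  have hD1' : (matT Sr * matT K)^(kd+1) * matT Dk = (matT Sr * matT K)^kd := by
    have h := congrArg matT hD1
    simp only [matT_cmul, matT_cpow] at h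
    exact h
  have hD2' : matT Dk * (matT Sr * matT K) * matT Dk = matT Dk := by
    have h := congrArg matT hD2
    simp only [matT_cmul] at h
    exact h
  have hD3' : (matT Sr * matT K) * matT Dk = matT Dk * (matT Sr * matT K) := by
    have h := congrArg matT hD3
    simp only [matT_cmul] at h
    exact h
  have hA' : matT A = matT U
      * ((Matrix.fromBlocks (matT Sr * matT K) (matT Sr * matT L) 0 0).submatrix
          (pe n3 r s) (pe n3 r s)) * (matT U).conjTranspose := by
    have h := congrArg matT hA
    simp only [matT_cmul, matT_conjT, matT_blockT, matT_zero] at h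
    exact h
  have hX' : matT (cmul (cmul U (blockT Dk (cmul (cmul (cmul Dk Dk) Sr) L) 0 0)) (conjT U))
      = matT U
      * ((Matrix.fromBlocks (matT Dk) (matT Dk * matT Dk * (matT Sr * matT L)) 0 0).submatrix
          (pe n3 r s) (pe n3 r s)) * (matT U).conjTranspose := by
    simp only [matT_cmul, matT_conjT, matT_blockT, matT_zero]
    rw [Matrix.mul_assoc (matT Dk * matT Dk) (matT Sr) (matT L)]
  obtain ⟨hG1, hG2, hG3⟩ := drazin_core (pe n3 r s) (matT U) hU1' hU2'
    (matT Sr * matT K) (matT Dk) (matT Sr * matT L) kd k hD1' hD2' hD3'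
    (matT A) (matT (cmul (cmul U (blockT Dk (cmul (cmul (cmul Dk Dk) Sr) L) 0 0)) (conjT U)))
    hA' hX' hk.1 hk.2
  refine ⟨?_, ?_, ?_⟩
  · apply matT_injective
    rw [matT_cmul, matT_cpow, matT_cpow]
    exact hG1
  · apply matT_injective
    rw [matT_cmul, matT_cmul]
    exact hG2
  · apply matT_injective
    rw [matT_cmul A (cmul (cmul U (blockT Dk (cmul (cmul (cmul Dk Dk) Sr) L) 0 0)) (conjT U)),
      matT_cmul (cmul (cmul U (blockT Dk (cmul (cmul (cmul Dk Dk) Sr) L) 0 0)) (conjT U)) A]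
    exact hG3
end
end
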